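/- arXiv:1808.07226 — 4 statements merged into one kernel-verified Lean document; each statement's English description precedes it below -/
import Mathlib

section
/- For any Ising model with interaction matrix J on n vertices, the difference between the free energy and the mean-field variational free energy satisfies F − F* ≤ 3 n^{2/3} ‖J‖_F^{2/3}. -/
open Finset

noncomputable section
open scoped Classical

/-- The ±1 value of a Boolean spin. -/
def spin (b : Bool) : ℝ := if b then 1 else -1

/-- The Ising Hamiltonian `∑_{i<j} J i j * x i * x j`. -/
def ham {n : ℕ} (J : Matrix (Fin n) (Fin n) ℝ) (x : Fin n → Bool) : ℝ :=
  ∑ i : Fin n, ∑ j : Fin n, if i < j then J i j * spin (x i) * spin (x j) else 0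

/-- The partition function `Z = ∑_x exp(∑_{i<j} J i j x_i x_j)`. -/
def partZ {n : ℕ} (J : Matrix (Fin n) (Fin n) ℝ) : ℝ :=
  ∑ x : Fin n → Bool, Real.exp (ham J x)

/-- The free energy `F = log Z`. -/
def freeEnergy {n : ℕ} (J : Matrix (Fin n) (Fin n) ℝ) : ℝ := Real.log (partZ J)

/-- Binary entropy (natural log). -/
def binEnt (p : ℝ) : ℝ := -(p * Real.log p) - (1 - p) * Real.log (1 - p)

/-- The mean-field objective `∑_{i<j} J i j x_i x_j + ∑_i H((x_i+1)/2)`. -/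
def mfObj {n : ℕ} (J : Matrix (Fin n) (Fin n) ℝ) (x : Fin n → ℝ) : ℝ :=
  (∑ i : Fin n, ∑ j : Fin n, if i < j then J i j * x i * x j else 0)
    + ∑ i : Fin n, binEnt ((x i + 1) / 2)

/-- The mean-field variational free energy `F* = max_{x ∈ [-1,1]^n} mfObj J x`. -/
def mfFreeEnergy {n : ℕ} (J : Matrix (Fin n) (Fin n) ℝ) : ℝ :=
  sSup {v | ∃ x : Fin n → ℝ, (∀ i, -1 ≤ x i ∧ x i ≤ 1) ∧ v = mfObj J x}

/-- The Frobenius norm `‖J‖_F = sqrt(∑_{i,j} J_{ij}²)`. -/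
def frob {n : ℕ} (J : Matrix (Fin n) (Fin n) ℝ) : ℝ :=
  Real.sqrt (∑ i : Fin n, ∑ j : Fin n, (J i j) ^ 2)

set_option linter.unusedSectionVars false
set_option linter.unusedVariables false
set_option linter.unreachableTactic false
set_option linter.unusedTactic false
set_option linter.unnecessarySeqFocus false
set_option maxHeartbeats 1000000


set_option linter.unusedSectionVars false
set_option linter.unreachableTactic false
set_option linter.unusedTactic false

namespace MFAux

variable {Ω : Type*} [Fintype Ω]

def mass (w : Ω → ℝ) : ℝ := ∑ x, w x
def wsum (w f : Ω → ℝ) : ℝ := ∑ x, w x * f x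
def avg (w f : Ω → ℝ) : ℝ := wsum w f / mass w
def vari (w f : Ω → ℝ) : ℝ := avg w (fun x => f x * f x) - (avg w f)^2
def covw (w f g : Ω → ℝ) : ℝ := avg w (fun x => f x * g x) - avg w f * avg w g
def cw (w : Ω → ℝ) {Γ : Type*} (P : Ω → Γ) (γ : Γ) : Ω → ℝ := fun x => if P x = γ then w x else 0
def CV (w : Ω → ℝ) {Γ : Type*} [Fintype Γ] (P : Ω → Γ) (f : Ω → ℝ) : ℝ :=
  ∑ γ, mass (cw w P γ) * vari (cw w P γ) f

variable {w f g : Ω → ℝ}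

lemma mass_nonneg (hw : ∀ x, 0 ≤ w x) : 0 ≤ mass w :=
  Finset.sum_nonneg fun x _ => hw x

lemma eq_zero_of_mass_eq_zero (hw : ∀ x, 0 ≤ w x) (h : mass w = 0) : ∀ x, w x = 0 := by
  intro x
  have := (Finset.sum_eq_zero_iff_of_nonneg (fun x _ => hw x)).1 h
  exact this x (Finset.mem_univ x)

lemma wsum_zero (h : ∀ x, w x = 0) : wsum w f = 0 := by
  unfold wsum; simp [h]

lemma avg_zero (h : ∀ x, w x = 0) : avg w f = 0 := by
  unfold avg; rw [wsum_zero h]; simp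

lemma vari_zero (h : ∀ x, w x = 0) : vari w f = 0 := by
  unfold vari; rw [avg_zero h, avg_zero h]; ring

lemma covw_zero (h : ∀ x, w x = 0) : covw w f g = 0 := by
  unfold covw; rw [avg_zero h, avg_zero h, avg_zero h]; ring

-- Cauchy-Schwarz: (wsum w f)^2 ≤ mass w * wsum w (f*f)
lemma wsum_sq_le (hw : ∀ x, 0 ≤ w x) :
    (wsum w f)^2 ≤ mass w * wsum w (fun x => f x * f x) := by
  have key : (∑ x, Real.sqrt (w x) * (Real.sqrt (w x) * f x))^2 ≤
      (∑ x, Real.sqrt (w x) ^ 2) * (∑ x, (Real.sqrt (w x) * f x)^2) :=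
    Finset.sum_mul_sq_le_sq_mul_sq _ _ _
  have e1 : ∀ x : Ω, Real.sqrt (w x) * (Real.sqrt (w x) * f x) = w x * f x := by
    intro x
    rw [← mul_assoc, Real.mul_self_sqrt (hw x)]
  have e2 : ∀ x : Ω, Real.sqrt (w x) ^ 2 = w x := fun x => Real.sq_sqrt (hw x)
  have e3 : ∀ x : Ω, (Real.sqrt (w x) * f x)^2 = w x * (f x * f x) := by
    intro x
    rw [mul_pow, Real.sq_sqrt (hw x)]; ring
  simp only [e1, e2, e3] at key
  exact key

lemma vari_nonneg (hw : ∀ x, 0 ≤ w x) : 0 ≤ vari w f := by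
  rcases eq_or_lt_of_le (mass_nonneg (w := w) hw) with h | h
  · rw [vari_zero (eq_zero_of_mass_eq_zero hw h.symm)]
  · have := wsum_sq_le (w := w) (f := f) hw
    unfold vari avg
    rw [div_pow, sub_nonneg, div_le_div_iff₀ (by positivity) h]
    calc (wsum w f)^2 * mass w ≤ (mass w * wsum w (fun x => f x * f x)) * mass w := by
          nlinarith [this, h]
      _ = wsum w (fun x => f x * f x) * mass w ^ 2 := by ring

lemma mass_mul_vari (h : mass w ≠ 0) :
    mass w * vari w f = wsum w (fun x => f x * f x) - (wsum w f)^2 / mass w := by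
  unfold vari avg
  field_simp

lemma abs_wsum_le (hw : ∀ x, 0 ≤ w x) (hf : ∀ x, |f x| ≤ 1) : |wsum w f| ≤ mass w := by
  calc |wsum w f| ≤ ∑ x, |w x * f x| := Finset.abs_sum_le_sum_abs _ _
    _ ≤ ∑ x, w x := by
        apply Finset.sum_le_sum
        intro x _
        rw [abs_mul, abs_of_nonneg (hw x)]
        calc w x * |f x| ≤ w x * 1 := by
              exact mul_le_mul_of_nonneg_left (hf x) (hw x)
          _ = w x := mul_one _
    _ = mass w := rfl

lemma abs_avg_le_one (hw : ∀ x, 0 ≤ w x) (hm : 0 < mass w) (hf : ∀ x, |f x| ≤ 1) :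
    |avg w f| ≤ 1 := by
  unfold avg
  rw [abs_div, abs_of_pos hm, div_le_one hm]
  exact abs_wsum_le hw hf

lemma avg_const_one (hm : mass w ≠ 0) : avg w (fun _ => (1:ℝ)) = 1 := by
  unfold avg wsum
  simp only [mul_one]
  rw [show (∑ x : Ω, w x) = mass w from rfl, div_self hm]

lemma vari_le_one (hw : ∀ x, 0 ≤ w x) (hf : ∀ x, f x * f x = 1) : vari w f ≤ 1 := by
  rcases eq_or_lt_of_le (mass_nonneg (w := w) hw) with h | h
  · rw [vari_zero (eq_zero_of_mass_eq_zero hw h.symm)]; norm_num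
  · unfold vari
    have : (fun x => f x * f x) = (fun _ : Ω => (1:ℝ)) := funext hf
    rw [this, avg_const_one h.ne']
    nlinarith [sq_nonneg (avg w f)]


lemma keyineq (m₁ m₂ S₁ S₂ c : ℝ) (h₁ : 0 < m₁) (h₂ : 0 < m₂)
    (hc : c = (S₁ - S₂)/(m₁+m₂) - ((S₁+S₂)/(m₁+m₂)) * ((m₁-m₂)/(m₁+m₂))) :
    (m₁+m₂) * c^2 ≤ S₁^2/m₁ + S₂^2/m₂ - (S₁+S₂)^2/(m₁+m₂) := by
  have hm : 0 < m₁ + m₂ := by linarith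
  have e : S₁^2/m₁ + S₂^2/m₂ - (S₁+S₂)^2/(m₁+m₂) - (m₁+m₂) * c^2
      = ((S₁*m₂ - S₂*m₁)^2 * (m₁-m₂)^2) / ((m₁+m₂)^3 * m₁ * m₂) := by
    subst hc
    field_simp
    ring
  nlinarith [div_nonneg (mul_nonneg (sq_nonneg (S₁*m₂ - S₂*m₁)) (sq_nonneg (m₁-m₂)))
      (le_of_lt (by positivity : (0:ℝ) < (m₁+m₂)^3 * m₁ * m₂))]

lemma cw_nonneg (hw : ∀ x, 0 ≤ w x) {Γ : Type*} (P : Ω → Γ) (γ : Γ) :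
    ∀ x, 0 ≤ cw w P γ x := by
  intro x; unfold cw; split <;> simp [hw x]

lemma mass_split (b : Ω → Bool) :
    mass w = mass (cw w b true) + mass (cw w b false) := by
  unfold mass cw
  rw [← Finset.sum_add_distrib]
  apply Finset.sum_congr rfl
  intro x _
  cases h : b x <;> simp [h]

lemma wsum_split (b : Ω → Bool) (f : Ω → ℝ) :
    wsum w f = wsum (cw w b true) f + wsum (cw w b false) f := by
  unfold wsum cw
  rw [← Finset.sum_add_distrib]
  apply Finset.sum_congr rfl
  intro x _
  cases h : b x <;> simp [h]

lemma wsum_bsgn (b : Ω → Bool) (f : Ω → ℝ) :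
    wsum w (fun x => f x * (if b x then (1:ℝ) else -1))
      = wsum (cw w b true) f - wsum (cw w b false) f := by
  unfold wsum cw
  rw [← Finset.sum_sub_distrib]
  apply Finset.sum_congr rfl
  intro x _
  cases h : b x <;> simp [h] <;> ring

lemma mass_bsgn (b : Ω → Bool) :
    wsum w (fun x => (if b x then (1:ℝ) else -1))
      = mass (cw w b true) - mass (cw w b false) := by
  unfold wsum mass cw
  rw [← Finset.sum_sub_distrib]
  apply Finset.sum_congr rfl
  intro x _
  cases h : b x <;> simp [h]

lemma covw_const_sign (hm : mass w ≠ 0) (ε : ℝ) (hsupp : ∀ x, w x * g x = ε * w x) :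
    covw w f g = 0 := by
  have e1 : wsum w (fun x => f x * g x) = ε * wsum w f := by
    unfold wsum
    rw [Finset.mul_sum]
    apply Finset.sum_congr rfl
    intro x _
    calc w x * (f x * g x) = (w x * g x) * f x := by ring
      _ = ε * w x * f x := by rw [hsupp x]
      _ = ε * (w x * f x) := by ring
  have e2 : wsum w g = ε * mass w := by
    unfold wsum mass
    rw [Finset.mul_sum]
    apply Finset.sum_congr rfl
    intro x _
    exact hsupp x
  unfold covw avg
  rw [e1, e2]
  field_simp
  ring

lemma split_ineq (hw : ∀ x, 0 ≤ w x) (b : Ω → Bool) (f : Ω → ℝ) :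
    mass w * (covw w f (fun x => if b x then (1:ℝ) else -1))^2
      + mass (cw w b true) * vari (cw w b true) f
      + mass (cw w b false) * vari (cw w b false) f
    ≤ mass w * vari w f := by
  set w₁ := cw w b true with hw₁def
  set w₂ := cw w b false with hw₂def
  have hw₁ : ∀ x, 0 ≤ w₁ x := cw_nonneg hw _ _
  have hw₂ : ∀ x, 0 ≤ w₂ x := cw_nonneg hw _ _
  have hm : mass w = mass w₁ + mass w₂ := mass_split b
  rcases eq_or_lt_of_le (mass_nonneg (w := w) hw) with h0 | h0
  · have hz := eq_zero_of_mass_eq_zero hw h0.symm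
    have hz1 : ∀ x, w₁ x = 0 := by intro x; simp [hw₁def, cw, hz x]
    have hz2 : ∀ x, w₂ x = 0 := by intro x; simp [hw₂def, cw, hz x]
    rw [vari_zero hz, vari_zero hz1, vari_zero hz2, covw_zero hz, ← h0]
    have m1 : mass w₁ = 0 := by unfold mass; simp [hz1]
    have m2 : mass w₂ = 0 := by unfold mass; simp [hz2]
    rw [m1, m2]; ring_nf; rfl
  · rcases eq_or_lt_of_le (mass_nonneg (w := w₁) hw₁) with h1 | h1
    · -- w₁ ≡ 0, so w = w₂
      have hz1 := eq_zero_of_mass_eq_zero hw₁ h1.symm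
      have hww2 : w = w₂ := by
        funext x
        have h := hz1 x
        simp only [hw₁def, cw] at h
        simp only [hw₂def, cw]
        cases hbx : b x
        · simp
        · rw [hbx] at h; simp at h; simp [h]
      have hcov : covw w f (fun x => if b x then (1:ℝ) else -1) = 0 := by
        apply covw_const_sign h0.ne' (-1)
        intro x
        cases hbx : b x
        · simp [hbx]
        · have hx0 : w x = 0 := by
            have h := hz1 x; simp only [hw₁def, cw, hbx] at h; simpa using h
          simp [hx0]
      rw [hcov, ← h1, hww2]
      simp
    · rcases eq_or_lt_of_le (mass_nonneg (w := w₂) hw₂) with h2 | h2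
      · have hz2 := eq_zero_of_mass_eq_zero hw₂ h2.symm
        have hww1 : w = w₁ := by
          funext x
          have h := hz2 x
          simp only [hw₂def, cw] at h
          simp only [hw₁def, cw]
          cases hbx : b x
          · rw [hbx] at h; simp at h; simp [h]
          · simp
        have hcov : covw w f (fun x => if b x then (1:ℝ) else -1) = 0 := by
          apply covw_const_sign h0.ne' 1
          intro x
          cases hbx : b x
          · have hx0 : w x = 0 := by
              have h := hz2 x; simp only [hw₂def, cw, hbx] at h; simpa using h
            simp [hx0]
          · simp [hbx]
        rw [hcov, ← h2, hww1]
        simp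
      · -- main case: both masses positive
        have hS : wsum w f = wsum w₁ f + wsum w₂ f := wsum_split b f
        have hT : wsum w (fun x => f x * f x) = wsum w₁ (fun x => f x * f x)
            + wsum w₂ (fun x => f x * f x) := wsum_split b _
        have hcov : covw w f (fun x => if b x then (1:ℝ) else -1)
            = (wsum w₁ f - wsum w₂ f)/(mass w₁ + mass w₂)
              - ((wsum w₁ f + wsum w₂ f)/(mass w₁ + mass w₂))
                * ((mass w₁ - mass w₂)/(mass w₁ + mass w₂)) := by
          unfold covw avg
          rw [wsum_bsgn b f, mass_bsgn b, hS, hm]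
        have key := keyineq (mass w₁) (mass w₂) (wsum w₁ f) (wsum w₂ f)
          (covw w f (fun x => if b x then (1:ℝ) else -1)) h1 h2 hcov
        rw [mass_mul_vari (w := w) h0.ne',
            mass_mul_vari (w := w₁) h1.ne',
            mass_mul_vari (w := w₂) h2.ne', hS, hT, hm]
        linarith


lemma cw_pair_true {Γ : Type*} (P : Ω → Γ) (b : Ω → Bool) (γ : Γ) :
    cw w (fun x => (P x, b x)) (γ, true) = cw (cw w P γ) b true := by
  funext x
  unfold cw
  by_cases h1 : P x = γ <;> by_cases h2 : b x = true <;>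
    simp [h1, h2, Prod.ext_iff]

lemma cw_pair_false {Γ : Type*} (P : Ω → Γ) (b : Ω → Bool) (γ : Γ) :
    cw w (fun x => (P x, b x)) (γ, false) = cw (cw w P γ) b false := by
  funext x
  unfold cw
  by_cases h1 : P x = γ <;> by_cases h2 : b x = true <;>
    simp [h1, h2, Prod.ext_iff]

lemma CV_nonneg {Γ : Type*} [Fintype Γ] (hw : ∀ x, 0 ≤ w x) (P : Ω → Γ) (f : Ω → ℝ) :
    0 ≤ CV w P f := by
  apply Finset.sum_nonneg
  intro γ _
  exact mul_nonneg (mass_nonneg (cw_nonneg hw P γ)) (vari_nonneg (cw_nonneg hw P γ))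

lemma CV_refine {Γ : Type*} [Fintype Γ] (hw : ∀ x, 0 ≤ w x) (P : Ω → Γ) (b : Ω → Bool)
    (f : Ω → ℝ) :
    CV w (fun x => (P x, b x)) f
      + ∑ γ, mass (cw w P γ) * (covw (cw w P γ) f (fun x => if b x then (1:ℝ) else -1))^2
    ≤ CV w P f := by
  unfold CV
  rw [Fintype.sum_prod_type]
  have : ∀ γ : Γ, (∑ b' : Bool, mass (cw w (fun x => (P x, b x)) (γ, b'))
      * vari (cw w (fun x => (P x, b x)) (γ, b')) f)
      = mass (cw (cw w P γ) b true) * vari (cw (cw w P γ) b true) f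
        + mass (cw (cw w P γ) b false) * vari (cw (cw w P γ) b false) f := by
    intro γ
    rw [Fintype.sum_bool, cw_pair_true, cw_pair_false]
  rw [Finset.sum_congr rfl (fun γ _ => this γ), ← Finset.sum_add_distrib]
  apply Finset.sum_le_sum
  intro γ _
  have := split_ineq (w := cw w P γ) (cw_nonneg hw P γ) b f
  linarith

lemma cw_comp_inj {Γ Γ' : Type*} (P : Ω → Γ) (e : Γ → Γ') (he : Function.Injective e) (γ : Γ) :
    cw w (fun x => e (P x)) (e γ) = cw w P γ := by
  funext x
  unfold cw
  simp [he.eq_iff]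

lemma CV_comp_inj {Γ Γ' : Type*} [Fintype Γ] [Fintype Γ'] (P : Ω → Γ) (e : Γ → Γ')
    (he : Function.Injective e) (f : Ω → ℝ) :
    CV w (fun x => e (P x)) f = CV w P f := by
  unfold CV
  set F : Γ' → ℝ := fun γ' => mass (cw w (fun x => e (P x)) γ')
      * vari (cw w (fun x => e (P x)) γ') f with hF
  symm
  calc ∑ γ : Γ, mass (cw w P γ) * vari (cw w P γ) f
      = ∑ γ : Γ, F (e γ) := by
        apply Finset.sum_congr rfl
        intro γ _
        rw [hF]
        simp only
        rw [cw_comp_inj P e he γ]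
    _ = ∑ γ' ∈ Finset.image e Finset.univ, F γ' :=
        (Finset.sum_image (fun a _ b _ h => he h)).symm
    _ = ∑ γ' : Γ', F γ' := by
        apply Finset.sum_subset (Finset.subset_univ _)
        intro γ' _ hγ'
        have hz : ∀ x, cw w (fun x => e (P x)) γ' x = 0 := by
          intro x
          unfold cw
          have : e (P x) ≠ γ' := by
            intro h
            exact hγ' (Finset.mem_image.2 ⟨P x, Finset.mem_univ _, h⟩)
          simp [this]
        rw [hF]
        simp only
        rw [vari_zero hz]
        have : mass (cw w (fun x => e (P x)) γ') = 0 := by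
          unfold mass; simp [hz]
        rw [this]; ring

lemma CV_trivial {Γ : Type*} [Fintype Γ] (P : Ω → Γ) (γ₀ : Γ) (hall : ∀ γ : Γ, γ = γ₀)
    (f : Ω → ℝ) : CV w P f = mass w * vari w f := by
  unfold CV
  rw [Finset.sum_eq_single γ₀ (fun γ _ hne => absurd (hall γ) hne)
      (fun h => absurd (Finset.mem_univ γ₀) h)]
  have : cw w P γ₀ = w := by
    funext x
    unfold cw
    simp [hall (P x)]
  rw [this]


lemma logsum {ι : Type*} [Fintype ι] (p a : ι → ℝ) (hp : ∀ i, 0 ≤ p i) (hps : ∑ i, p i = 1)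
    (ha : ∀ i, 0 ≤ a i) (hpa : ∀ i, p i ≠ 0 → a i ≠ 0) :
    ∑ i, p i * Real.log (a i / p i) ≤ Real.log (∑ i, a i) := by
  have hex : ∃ i, p i ≠ 0 := by
    by_contra h
    push_neg at h
    rw [Finset.sum_congr rfl (fun i _ => h i)] at hps
    simp at hps
  obtain ⟨i₀, hi₀⟩ := hex
  have hA : 0 < ∑ i, a i := by
    have h1 : 0 < a i₀ := lt_of_le_of_ne (ha i₀) (Ne.symm (hpa i₀ hi₀))
    have h2 : a i₀ ≤ ∑ i, a i := Finset.single_le_sum (fun i _ => ha i) (Finset.mem_univ i₀)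
    linarith
  set A := ∑ i, a i with hAdef
  have key : ∀ i, p i * Real.log (a i / p i) ≤ a i / A - p i + p i * Real.log A := by
    intro i
    rcases eq_or_lt_of_le (hp i) with h | h
    · rw [← h]
      simp
      exact div_nonneg (ha i) hA.le
    · have hai : 0 < a i := lt_of_le_of_ne (ha i) (Ne.symm (hpa i h.ne'))
      have h1 : Real.log (a i / (A * p i)) ≤ a i / (A * p i) - 1 :=
        Real.log_le_sub_one_of_pos (by positivity)
      have h2 : Real.log (a i / p i) = Real.log (a i / (A * p i)) + Real.log A := by
        rw [← Real.log_mul (by positivity) hA.ne']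
        congr 1
        field_simp
      rw [h2]
      have h3 : p i * Real.log (a i / (A * p i)) ≤ p i * (a i / (A * p i) - 1) :=
        mul_le_mul_of_nonneg_left h1 (hp i)
      have h4 : p i * (a i / (A * p i) - 1) = a i / A - p i := by
        field_simp
      nlinarith
  calc ∑ i, p i * Real.log (a i / p i) ≤ ∑ i, (a i / A - p i + p i * Real.log A) :=
        Finset.sum_le_sum (fun i _ => key i)
    _ = (∑ i, a i) / A - (∑ i, p i) + (∑ i, p i) * Real.log A := by
        rw [Finset.sum_add_distrib, Finset.sum_sub_distrib, ← Finset.sum_div,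
            ← Finset.sum_mul]
    _ = Real.log A := by
        rw [hps, ← hAdef, div_self hA.ne']
        ring

lemma sum_sqrt_le {ι : Type*} [Fintype ι] (p q : ι → ℝ) (hp : ∀ i, 0 ≤ p i)
    (hq : ∀ i, 0 ≤ q i) (hps : ∑ i, p i ≤ 1) :
    ∑ i, p i * Real.sqrt (q i) ≤ Real.sqrt (∑ i, p i * q i) := by
  have e : ∀ i, p i * Real.sqrt (q i) = Real.sqrt (p i) * Real.sqrt (p i * q i) := by
    intro i
    rw [Real.sqrt_mul (hp i)]
    rw [← mul_assoc, Real.mul_self_sqrt (hp i)]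
  have cs : (∑ i, Real.sqrt (p i) * Real.sqrt (p i * q i))^2
      ≤ (∑ i, Real.sqrt (p i) ^ 2) * (∑ i, Real.sqrt (p i * q i) ^ 2) :=
    Finset.sum_mul_sq_le_sq_mul_sq _ _ _
  have e2 : (∑ i, Real.sqrt (p i) ^ 2) = ∑ i, p i := by
    apply Finset.sum_congr rfl; intro i _; exact Real.sq_sqrt (hp i)
  have e3 : (∑ i, Real.sqrt (p i * q i) ^ 2) = ∑ i, p i * q i := by
    apply Finset.sum_congr rfl; intro i _
    exact Real.sq_sqrt (mul_nonneg (hp i) (hq i))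
  rw [e2, e3] at cs
  have hpq : 0 ≤ ∑ i, p i * q i :=
    Finset.sum_nonneg (fun i _ => mul_nonneg (hp i) (hq i))
  have hnn : 0 ≤ ∑ i, p i * Real.sqrt (q i) :=
    Finset.sum_nonneg (fun i _ => mul_nonneg (hp i) (Real.sqrt_nonneg _))
  rw [Finset.sum_congr rfl (fun i _ => e i)]
  have hnn2 : 0 ≤ ∑ i, Real.sqrt (p i) * Real.sqrt (p i * q i) :=
    Finset.sum_nonneg (fun i _ => mul_nonneg (Real.sqrt_nonneg _) (Real.sqrt_nonneg _))
  calc ∑ i, Real.sqrt (p i) * Real.sqrt (p i * q i)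
      = Real.sqrt ((∑ i, Real.sqrt (p i) * Real.sqrt (p i * q i))^2) :=
        (Real.sqrt_sq hnn2).symm
    _ ≤ Real.sqrt (∑ i, p i * q i) := by
        apply Real.sqrt_le_sqrt
        calc (∑ i, Real.sqrt (p i) * Real.sqrt (p i * q i))^2
            ≤ (∑ i, p i) * (∑ i, p i * q i) := cs
          _ ≤ 1 * (∑ i, p i * q i) := mul_le_mul_of_nonneg_right hps hpq
          _ = ∑ i, p i * q i := one_mul _

lemma neg_mul_log_le (p : ℝ) (hp : 0 ≤ p) :
    -(p * Real.log p) ≤ p * Real.log 2 + 1/2 - p := by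
  rcases eq_or_lt_of_le hp with h | h
  · rw [← h]; norm_num
  · have h1 : Real.log (1/(2*p)) ≤ 1/(2*p) - 1 :=
      Real.log_le_sub_one_of_pos (by positivity)
    have h2 : Real.log (1/(2*p)) = -(Real.log 2 + Real.log p) := by
      rw [one_div, Real.log_inv, Real.log_mul (by norm_num) h.ne']
    rw [h2] at h1
    have h3 : p * (-(Real.log 2 + Real.log p)) ≤ p * (1/(2*p) - 1) :=
      mul_le_mul_of_nonneg_left h1 hp
    have h4 : p * (1/(2*p) - 1) = 1/2 - p := by
      field_simp
    nlinarith

lemma binEnt_le_log2 (p : ℝ) (hp : 0 ≤ p) (hp1 : p ≤ 1) : binEnt p ≤ Real.log 2 := by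
  unfold binEnt
  have h1 := neg_mul_log_le p hp
  have h2 := neg_mul_log_le (1 - p) (by linarith)
  nlinarith [Real.log_nonneg (by norm_num : (1:ℝ) ≤ 2)]


end MFAux

namespace MFAux

variable {Ω : Type*} [Fintype Ω] {w f g : Ω → ℝ}

lemma wsum_nonneg (hw : ∀ x, 0 ≤ w x) (hf : ∀ x, 0 ≤ f x) : 0 ≤ wsum w f :=
  Finset.sum_nonneg fun x _ => mul_nonneg (hw x) (hf x)

lemma avg_nonneg (hw : ∀ x, 0 ≤ w x) (hf : ∀ x, 0 ≤ f x) : 0 ≤ avg w f :=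
  div_nonneg (wsum_nonneg hw hf) (mass_nonneg hw)

lemma wsum_le_mass (hw : ∀ x, 0 ≤ w x) (hf : ∀ x, f x ≤ 1) : wsum w f ≤ mass w :=
  Finset.sum_le_sum fun x _ => by
    calc w x * f x ≤ w x * 1 := mul_le_mul_of_nonneg_left (hf x) (hw x)
      _ = w x := mul_one _

lemma avg_le_one (hw : ∀ x, 0 ≤ w x) (hf : ∀ x, f x ≤ 1) : avg w f ≤ 1 := by
  rcases eq_or_lt_of_le (mass_nonneg (w := w) hw) with h | h
  · rw [avg_zero (eq_zero_of_mass_eq_zero hw h.symm)]; norm_num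
  · rw [avg, div_le_one h]
    exact wsum_le_mass hw hf

/-- Gibbs variational identity on a cell. -/
lemma log_mass_eq (hm : 0 < mass w) (H : Ω → ℝ)
    (hsupp : ∀ x, w x ≠ 0 → w x = Real.exp (H x)) :
    Real.log (mass w) = avg w H
      + (-∑ x, (w x / mass w) * Real.log (w x / mass w)) := by
  have key : ∀ x : Ω, (w x / mass w) * H x - (w x / mass w) * Real.log (w x / mass w)
      = (w x / mass w) * Real.log (mass w) := by
    intro x
    by_cases hx : w x = 0
    · simp [hx]
    · have hwx : w x = Real.exp (H x) := hsupp x hx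
      have hpos : 0 < w x := hwx ▸ Real.exp_pos _
      rw [Real.log_div hx hm.ne']
      have : Real.log (w x) = H x := by rw [hwx, Real.log_exp]
      rw [this]
      ring
  have hsum : ∑ x, ((w x / mass w) * H x - (w x / mass w) * Real.log (w x / mass w))
      = ∑ x, (w x / mass w) * Real.log (mass w) :=
    Finset.sum_congr rfl fun x _ => key x
  rw [Finset.sum_sub_distrib] at hsum
  have h1 : ∑ x, (w x / mass w) * H x = avg w H := by
    rw [avg, wsum, Finset.sum_div]
    apply Finset.sum_congr rfl
    intro x _
    ring
  have h2 : ∑ x, (w x / mass w) * Real.log (mass w) = Real.log (mass w) := by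
    rw [← Finset.sum_mul, ← Finset.sum_div, ← mass, div_self hm.ne', one_mul]
  rw [h1, h2] at hsum
  linarith

/-- Subadditivity of entropy for a distribution on `Fin n → Bool`. -/
lemma ent_le_sum_binEnt {n : ℕ} (w : (Fin n → Bool) → ℝ) (hw : ∀ x, 0 ≤ w x)
    (hm : 0 < mass w) :
    -∑ x, (w x / mass w) * Real.log (w x / mass w)
      ≤ ∑ i, binEnt (avg w (fun x => if x i then 1 else 0)) := by
  set p : (Fin n → Bool) → ℝ := fun x => w x / mass w with hpdef
  set q : Fin n → ℝ := fun i => avg w (fun x => if x i then 1 else 0) with hqdef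
  have hq0 : ∀ i, 0 ≤ q i := fun i =>
    avg_nonneg hw (fun x => by split <;> norm_num)
  have hq1 : ∀ i, q i ≤ 1 := fun i =>
    avg_le_one hw (fun x => by split <;> norm_num)
  set a : (Fin n → Bool) → ℝ := fun x => ∏ i, (if x i then q i else 1 - q i) with hadef
  have hp0 : ∀ x, 0 ≤ p x := fun x => div_nonneg (hw x) hm.le
  have hps : ∑ x, p x = 1 := by
    rw [hpdef]
    simp only
    rw [← Finset.sum_div, ← mass, div_self hm.ne']
  have ha0 : ∀ x, 0 ≤ a x := by
    intro x
    apply Finset.prod_nonneg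
    intro i _
    split
    · exact hq0 i
    · linarith [hq1 i]
  -- marginal lower bound: each factor is at least p x > 0 on the support
  have hfac : ∀ (x : Fin n → Bool), w x ≠ 0 → ∀ i, (0:ℝ) < (if x i then q i else 1 - q i) := by
    intro x hx i
    have hwx : 0 < w x := lt_of_le_of_ne (hw x) (Ne.symm hx)
    have hkey : w x ≤ wsum w (fun y => if y i = x i then 1 else 0) := by
      have : w x * (if x i = x i then (1:ℝ) else 0) = w x := by simp
      rw [wsum]
      calc w x = w x * (if x i = x i then (1:ℝ) else 0) := this.symm
        _ ≤ ∑ y, w y * (if y i = x i then (1:ℝ) else 0) := by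
            apply Finset.single_le_sum (f := fun y => w y * (if y i = x i then (1:ℝ) else 0))
              (fun y _ => mul_nonneg (hw y) (by split <;> norm_num)) (Finset.mem_univ x)
    have hsum2 : wsum w (fun y => if y i = true then 1 else 0)
        + wsum w (fun y => if y i = false then 1 else 0) = mass w := by
      rw [wsum, wsum, ← Finset.sum_add_distrib, mass]
      apply Finset.sum_congr rfl
      intro y _
      cases hyi : y i <;> simp [hyi]
    cases hxi : x i
    · -- factor is 1 - q i = avg of indicator of false
      have hcomp : 1 - q i = avg w (fun y => if y i = false then 1 else 0) := by
        have hplus : q i + avg w (fun y => if y i = false then 1 else 0) = 1 := by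
          rw [hqdef]
          simp only [avg]
          rw [← add_div, hsum2, div_self hm.ne']
        linarith
      have h' : (if false = true then q i else 1 - q i) = 1 - q i := by simp
      rw [h', hcomp]
      have : 0 < wsum w (fun y => if y i = false then 1 else 0) := by
        apply lt_of_lt_of_le hwx
        rw [hxi] at hkey
        exact hkey
      exact div_pos this hm
    · have h' : (if true = true then q i else 1 - q i) = q i := by simp
      rw [h']
      have hqeq : q i = avg w (fun y => if y i = true then 1 else 0) := by
        rw [hqdef]
      rw [hqeq]
      have : 0 < wsum w (fun y => if y i = true then 1 else 0) := by
        apply lt_of_lt_of_le hwx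
        rw [hxi] at hkey
        exact hkey
      exact div_pos this hm
  have hpa : ∀ x, p x ≠ 0 → a x ≠ 0 := by
    intro x hx
    have hwx : w x ≠ 0 := by
      intro h
      apply hx
      rw [hpdef]; simp [h]
    have : 0 < a x := Finset.prod_pos (fun i _ => hfac x hwx i)
    exact this.ne'
  have hasum : ∑ x, a x = 1 := by
    rw [hadef]
    simp only
    have := Finset.prod_univ_sum (fun _ : Fin n => (Finset.univ : Finset Bool))
      (fun i b => if b then q i else 1 - q i)
    rw [Fintype.piFinset_univ] at this
    rw [← this]
    have : ∀ i : Fin n, ∑ b : Bool, (if b then q i else 1 - q i) = 1 := by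
      intro i
      rw [Fintype.sum_bool]
      simp
    rw [Finset.prod_congr rfl (fun i _ => this i)]
    simp
  have hlogsum := logsum p a hp0 hps ha0 hpa
  rw [hasum, Real.log_one] at hlogsum
  -- ∑ p log(a/p) = ∑ p log a - ∑ p log p
  have hsplit : ∑ x, p x * Real.log (a x / p x)
      = ∑ x, p x * Real.log (a x) - ∑ x, p x * Real.log (p x) := by
    rw [← Finset.sum_sub_distrib]
    apply Finset.sum_congr rfl
    intro x _
    by_cases hx : p x = 0
    · simp [hx]
    · rw [Real.log_div (hpa x hx) hx]
      ring
  rw [hsplit] at hlogsum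
  -- ∑ p log a = ∑_i (q i log q i + (1-q i) log (1-q i))
  have hloga : ∑ x, p x * Real.log (a x)
      = ∑ i, (q i * Real.log (q i) + (1 - q i) * Real.log (1 - q i)) := by
    have step1 : ∑ x, p x * Real.log (a x)
        = ∑ x, ∑ i, p x * Real.log (if x i then q i else 1 - q i) := by
      apply Finset.sum_congr rfl
      intro x _
      by_cases hx : p x = 0
      · simp [hx]
      · have hwx : w x ≠ 0 := by
          intro h; apply hx; rw [hpdef]; simp [h]
        rw [← Finset.mul_sum]
        congr 1
        rw [hadef]
        simp only
        rw [Real.log_prod]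
        intro i _
        exact (hfac x hwx i).ne'
    rw [step1, Finset.sum_comm]
    apply Finset.sum_congr rfl
    intro i _
    have e : ∀ x : Fin n → Bool, p x * Real.log (if x i then q i else 1 - q i)
        = Real.log (q i) * (p x * (if x i then 1 else 0))
          + Real.log (1 - q i) * (p x * (if x i then 0 else 1)) := by
      intro x
      cases hxi : x i <;> simp [hxi] <;> ring
    rw [Finset.sum_congr rfl (fun x _ => e x), Finset.sum_add_distrib,
        ← Finset.mul_sum, ← Finset.mul_sum]
    have eT : ∑ x, p x * (if x i then (1:ℝ) else 0) = q i := by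
      rw [hqdef]
      simp only
      rw [avg, wsum, Finset.sum_div]
      apply Finset.sum_congr rfl
      intro x _
      ring
    have eF : ∑ x, p x * (if x i then (0:ℝ) else 1) = 1 - q i := by
      have : ∀ x : Fin n → Bool, p x * (if x i then (0:ℝ) else 1)
          = p x - p x * (if x i then 1 else 0) := by
        intro x; cases hxi : x i <;> simp [hxi]
      rw [Finset.sum_congr rfl (fun x _ => this x), Finset.sum_sub_distrib, hps, eT]
    rw [eT, eF]
    ring
  rw [hloga] at hlogsum
  have hfin : -∑ x, p x * Real.log (p x) ≤ ∑ i, binEnt (q i) := by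
    have e : ∑ i, binEnt (q i)
        = -∑ i, (q i * Real.log (q i) + (1 - q i) * Real.log (1 - q i)) := by
      rw [← Finset.sum_neg_distrib]
      apply Finset.sum_congr rfl
      intro i _
      unfold binEnt
      ring
    rw [e]
    linarith
  simpa only [hpdef, hqdef] using hfin
end MFAux


namespace MFAux

variable {Ω : Type*} [Fintype Ω] {w f g : Ω → ℝ}

lemma sum_mass_cw {Γ : Type*} [Fintype Γ] (P : Ω → Γ) :
    ∑ γ, mass (cw w P γ) = mass w := by
  unfold mass cw
  rw [Finset.sum_comm]
  apply Finset.sum_congr rfl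
  intro x _
  rw [Finset.sum_ite_eq]
  simp

end MFAux

namespace MFMain
open MFAux

variable {n : ℕ}

def gw (J : Matrix (Fin n) (Fin n) ℝ) : (Fin n → Bool) → ℝ := fun x => Real.exp (ham J x)
def sg (i : Fin n) : (Fin n → Bool) → ℝ := fun x => spin (x i)

lemma gw_pos (J : Matrix (Fin n) (Fin n) ℝ) : ∀ x, 0 < gw J x := fun x => Real.exp_pos _
lemma gw_nonneg (J : Matrix (Fin n) (Fin n) ℝ) : ∀ x, 0 ≤ gw J x := fun x => (gw_pos J x).le
lemma mass_gw (J : Matrix (Fin n) (Fin n) ℝ) : mass (gw J) = partZ J := rfl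
lemma partZ_pos (J : Matrix (Fin n) (Fin n) ℝ) : 0 < partZ J := by
  rw [← mass_gw]
  unfold mass
  apply Finset.sum_pos (fun x _ => gw_pos J x)
  exact ⟨fun _ => true, Finset.mem_univ _⟩

lemma sg_sq (i : Fin n) (x : Fin n → Bool) : sg i x * sg i x = 1 := by
  unfold sg spin
  cases x i <;> norm_num

lemma sg_abs (i : Fin n) (x : Fin n → Bool) : |sg i x| ≤ 1 := by
  unfold sg spin
  cases x i <;> norm_num

variable (J : Matrix (Fin n) (Fin n) ℝ)

/-- The average of the Hamiltonian over a weighted cell. -/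
lemma avg_ham {W : (Fin n → Bool) → ℝ} (hm : 0 < mass W) :
    avg W (ham J) = ∑ i, ∑ j, (if i < j then J i j * avg W (fun x => sg i x * sg j x) else 0) := by
  have h1 : wsum W (ham J) = ∑ i, ∑ j,
      (if i < j then J i j * wsum W (fun x => sg i x * sg j x) else 0) := by
    unfold wsum ham
    have e : ∀ x, W x * (∑ i, ∑ j, if i < j then J i j * spin (x i) * spin (x j) else 0)
        = ∑ i, ∑ j, (if i < j then J i j * (W x * (sg i x * sg j x)) else 0) := by
      intro x
      rw [Finset.mul_sum]
      apply Finset.sum_congr rfl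
      intro i _
      rw [Finset.mul_sum]
      apply Finset.sum_congr rfl
      intro j _
      split
      · unfold sg; ring
      · ring
    rw [Finset.sum_congr rfl (fun x _ => e x)]
    rw [Finset.sum_comm]
    apply Finset.sum_congr rfl
    intro i _
    rw [Finset.sum_comm]
    apply Finset.sum_congr rfl
    intro j _
    split
    · rw [Finset.mul_sum]
    · simp
  unfold avg
  rw [h1, Finset.sum_div]
  apply Finset.sum_congr rfl
  intro i _
  rw [Finset.sum_div]
  apply Finset.sum_congr rfl
  intro j _
  split
  · rw [mul_div_assoc]
  · simp

lemma avg_prod_eq {W : (Fin n → Bool) → ℝ} (i j : Fin n) :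
    avg W (fun x => sg i x * sg j x) = avg W (sg i) * avg W (sg j) + covw W (sg i) (sg j) := by
  unfold covw
  ring

lemma avg_sg_eq {W : (Fin n → Bool) → ℝ} (hm : 0 < mass W) (i : Fin n) :
    (avg W (sg i) + 1) / 2 = avg W (fun x => if x i then 1 else 0) := by
  have e : wsum W (sg i) = 2 * wsum W (fun x => if x i then 1 else 0) - mass W := by
    unfold wsum mass
    rw [Finset.mul_sum, ← Finset.sum_sub_distrib]
    apply Finset.sum_congr rfl
    intro x _
    unfold sg spin
    cases hxi : x i <;> simp [hxi] <;> ring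
  unfold avg
  rw [e]
  field_simp
  ring

/-- Per-cell mean-field bound. -/
lemma cell_bound {Γ : Type*} (P : (Fin n → Bool) → Γ) (γ : Γ)
    (hm : 0 < mass (cw (gw J) P γ)) :
    Real.log (mass (cw (gw J) P γ)) ≤
      mfObj J (fun i => avg (cw (gw J) P γ) (sg i))
      + ∑ i, ∑ j, (if i < j then J i j * covw (cw (gw J) P γ) (sg i) (sg j) else 0) := by
  set W := cw (gw J) P γ with hWdef
  have hW : ∀ x, 0 ≤ W x := cw_nonneg (gw_nonneg J) P γ
  have hsupp : ∀ x, W x ≠ 0 → W x = Real.exp (ham J x) := by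
    intro x hx
    rw [hWdef] at hx ⊢
    unfold cw at hx ⊢
    by_cases h : P x = γ
    · rw [if_pos h]; rfl
    · rw [if_neg h] at hx
      exact absurd rfl hx
  have hgibbs := log_mass_eq hm (ham J) hsupp
  have hent := ent_le_sum_binEnt W hW hm
  have hham := avg_ham J hm
  have hsplit : ∑ i, ∑ j, (if i < j then J i j * avg W (fun x => sg i x * sg j x) else 0)
      = (∑ i, ∑ j, (if i < j then J i j * (avg W (sg i)) * (avg W (sg j)) else 0))
        + ∑ i, ∑ j, (if i < j then J i j * covw W (sg i) (sg j) else 0) := by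
    rw [← Finset.sum_add_distrib]
    apply Finset.sum_congr rfl
    intro i _
    rw [← Finset.sum_add_distrib]
    apply Finset.sum_congr rfl
    intro j _
    split
    · rw [avg_prod_eq]; ring
    · ring
  have hmf : mfObj J (fun i => avg W (sg i))
      = (∑ i, ∑ j, (if i < j then J i j * (avg W (sg i)) * (avg W (sg j)) else 0))
        + ∑ i, binEnt (avg W (fun x => if x i then 1 else 0)) := by
    unfold mfObj
    congr 1
    apply Finset.sum_congr rfl
    intro i _
    rw [avg_sg_eq hm]
  rw [hgibbs, hham, hsplit, hmf]
  have := hent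
  linarith

/-- Bounded above: the mean-field objective on the box. -/
lemma bddAbove_mfSet :
    BddAbove {v | ∃ x : Fin n → ℝ, (∀ i, -1 ≤ x i ∧ x i ≤ 1) ∧ v = mfObj J x} := by
  use (∑ i, ∑ j, |J i j|) + n * Real.log 2
  rintro v ⟨x, hx, rfl⟩
  unfold mfObj
  have h1 : (∑ i, ∑ j, if i < j then J i j * x i * x j else 0) ≤ ∑ i, ∑ j, |J i j| := by
    apply Finset.sum_le_sum
    intro i _
    apply Finset.sum_le_sum
    intro j _
    split
    · calc J i j * x i * x j ≤ |J i j * x i * x j| := le_abs_self _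
        _ = |J i j| * |x i| * |x j| := by rw [abs_mul, abs_mul]
        _ ≤ |J i j| * 1 * 1 := by
            apply mul_le_mul
            · apply mul_le_mul_of_nonneg_left _ (abs_nonneg _)
              exact abs_le.mpr (hx i)
            · exact abs_le.mpr (hx j)
            · exact abs_nonneg _
            · positivity
        _ = |J i j| := by ring
    · positivity
  have h2 : ∑ i, binEnt ((x i + 1) / 2) ≤ (n : ℝ) * Real.log 2 := by
    calc ∑ i, binEnt ((x i + 1) / 2) ≤ ∑ (_ : Fin n), Real.log 2 := by
          apply Finset.sum_le_sum
          intro i _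
          exact binEnt_le_log2 _ (by linarith [(hx i).1]) (by linarith [(hx i).2])
      _ = (n : ℝ) * Real.log 2 := by
          rw [Finset.sum_const, Finset.card_univ, Fintype.card_fin, nsmul_eq_mul]
  linarith

lemma mfObj_le_mfFreeEnergy {W : (Fin n → Bool) → ℝ} (hW : ∀ x, 0 ≤ W x)
    (hm : 0 < mass W) :
    mfObj J (fun i => avg W (sg i)) ≤ mfFreeEnergy J := by
  apply le_csSup (bddAbove_mfSet J)
  refine ⟨fun i => avg W (sg i), fun i => ?_, rfl⟩
  have := abs_avg_le_one hW hm (f := sg i) (fun x => sg_abs i x)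
  exact abs_le.mp this

/-- Per-cell bound against the mean-field free energy. -/
lemma cell_bound' {Γ : Type*} (P : (Fin n → Bool) → Γ) (γ : Γ)
    (hm : 0 < mass (cw (gw J) P γ)) :
    Real.log (mass (cw (gw J) P γ)) ≤ mfFreeEnergy J
      + ∑ i, ∑ j, (if i < j then J i j * covw (cw (gw J) P γ) (sg i) (sg j) else 0) := by
  have h1 := cell_bound J P γ hm
  have h2 := mfObj_le_mfFreeEnergy J (cw_nonneg (gw_nonneg J) P γ) hm
  linarith

end MFMain

namespace MFMain
open MFAux

variable {n : ℕ} (J : Matrix (Fin n) (Fin n) ℝ)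

def Ps {t : ℕ} (s : Fin t → Fin n) : (Fin n → Bool) → (Fin t → Bool) :=
  fun x a => x (s a)

def covQ (W : (Fin n → Bool) → ℝ) : ℝ := ∑ i, ∑ j, (covw W (sg i) (sg j))^2

def CT (W : (Fin n → Bool) → ℝ) : ℝ :=
  ∑ i, ∑ j, (if i < j then J i j * covw W (sg i) (sg j) else 0)

lemma covQ_nonneg (W : (Fin n → Bool) → ℝ) : 0 ≤ covQ W :=
  Finset.sum_nonneg fun i _ => Finset.sum_nonneg fun j _ => sq_nonneg _

/-- Conditioning decomposition of the free energy. -/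
lemma partition_log_bound {Γ : Type*} [Fintype Γ] (P : (Fin n → Bool) → Γ) :
    freeEnergy J ≤ Real.log (Fintype.card Γ)
      + ∑ γ, (mass (cw (gw J) P γ) / partZ J) * Real.log (mass (cw (gw J) P γ)) := by
  set Z := partZ J with hZdef
  have hZ : 0 < Z := partZ_pos J
  set p : Γ → ℝ := fun γ => mass (cw (gw J) P γ) / Z with hpdef
  have hp0 : ∀ γ, 0 ≤ p γ := fun γ =>
    div_nonneg (mass_nonneg (cw_nonneg (gw_nonneg J) P γ)) hZ.le
  have hps : ∑ γ, p γ = 1 := by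
    rw [hpdef]
    simp only
    rw [← Finset.sum_div, sum_mass_cw, mass_gw, ← hZdef, div_self hZ.ne']
  have hiden : ∑ γ, p γ * Real.log (mass (cw (gw J) P γ)) - ∑ γ, p γ * Real.log (p γ)
      = Real.log Z := by
    rw [← Finset.sum_sub_distrib]
    have key : ∀ γ, p γ * Real.log (mass (cw (gw J) P γ)) - p γ * Real.log (p γ)
        = p γ * Real.log Z := by
      intro γ
      rcases eq_or_lt_of_le (mass_nonneg (cw_nonneg (gw_nonneg J) P γ)) with h | h
      · have : p γ = 0 := by rw [hpdef]; simp [← h]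
        rw [this]; ring
      · have hplog : Real.log (p γ) = Real.log (mass (cw (gw J) P γ)) - Real.log Z := by
          rw [hpdef]
          simp only
          rw [Real.log_div h.ne' hZ.ne']
        rw [hplog]
        ring
    rw [Finset.sum_congr rfl (fun γ _ => key γ), ← Finset.sum_mul, hps, one_mul]
  have hent : -∑ γ, p γ * Real.log (p γ) ≤ Real.log (Fintype.card Γ) := by
    have := logsum p (fun _ => (1:ℝ)) hp0 hps (fun _ => zero_le_one) (fun _ _ => one_ne_zero)
    rw [Finset.sum_const, Finset.card_univ, nsmul_eq_mul, mul_one] at this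
    calc -∑ γ, p γ * Real.log (p γ) = ∑ γ, p γ * Real.log (1 / p γ) := by
          rw [← Finset.sum_neg_distrib]
          apply Finset.sum_congr rfl
          intro γ _
          rw [one_div, Real.log_inv]
          ring
      _ ≤ Real.log (Fintype.card Γ) := this
  unfold freeEnergy
  rw [← hZdef]
  linarith

/-- Cauchy—Schwarz bound on the covariance error term. -/
lemma covw_comm (W : (Fin n → Bool) → ℝ) (i j : Fin n) :
    covw W (sg i) (sg j) = covw W (sg j) (sg i) := by
  unfold covw
  have : (fun x => sg i x * sg j x) = (fun x => sg j x * sg i x) := by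
    funext x; ring
  rw [this]
  ring

lemma CT_le (hsym : J.IsSymm) (hdiag : ∀ i, J i i = 0) (W : (Fin n → Bool) → ℝ) :
    CT J W ≤ (frob J / 2) * Real.sqrt (covQ W) := by
  set u : Fin n × Fin n → ℝ := fun q => if q.1 < q.2 then J q.1 q.2 else 0 with hudef
  set v : Fin n × Fin n → ℝ :=
    fun q => if q.1 < q.2 then covw W (sg q.1) (sg q.2) else 0 with hvdef
  have hCT : CT J W = ∑ q : Fin n × Fin n, u q * v q := by
    rw [Fintype.sum_prod_type]
    unfold CT
    apply Finset.sum_congr rfl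
    intro i _
    apply Finset.sum_congr rfl
    intro j _
    rw [hudef, hvdef]
    simp only
    split
    · ring
    · ring
  have hcs : (∑ q : Fin n × Fin n, u q * v q)^2
      ≤ (∑ q : Fin n × Fin n, u q ^ 2) * (∑ q : Fin n × Fin n, v q ^ 2) :=
    Finset.sum_mul_sq_le_sq_mul_sq _ _ _
  have hJsymm : ∀ i j, J j i = J i j := by
    intro i j
    have := congrFun (congrFun hsym i) j
    simpa [Matrix.transpose_apply] using this
  have hu2 : 2 * (∑ q : Fin n × Fin n, u q ^ 2) = frob J ^ 2 := by
    have hfr : frob J ^ 2 = ∑ i, ∑ j, J i j ^ 2 := by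
      unfold frob
      rw [Real.sq_sqrt]
      apply Finset.sum_nonneg
      intro i _
      exact Finset.sum_nonneg fun j _ => sq_nonneg _
    rw [hfr, Fintype.sum_prod_type]
    have swap : ∑ i, ∑ j, (if (i:Fin n) < j then J i j ^2 else 0)
        = ∑ i, ∑ j, (if (j:Fin n) < i then J i j ^2 else 0) := by
      rw [Finset.sum_comm]
      apply Finset.sum_congr rfl
      intro j _
      apply Finset.sum_congr rfl
      intro i _
      rw [hJsymm i j]
    have tri : ∀ i j : Fin n, J i j ^ 2
        = (if i < j then J i j ^2 else 0) + (if j < i then J i j ^2 else 0) := by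
      intro i j
      rcases lt_trichotomy i j with h | h | h
      · rw [if_pos h, if_neg (asymm h)]; ring
      · subst h
        rw [if_neg (lt_irrefl i), hdiag i]
        ring
      · rw [if_neg (asymm h), if_pos h]; ring
    have hue : ∀ i j : Fin n, u (i,j)^2 = (if i < j then J i j ^2 else 0) := by
      intro i j
      rw [hudef]
      simp only
      split
      · rfl
      · ring
    calc 2 * (∑ i, ∑ j, u (i, j) ^ 2)
        = (∑ i, ∑ j, (if (i:Fin n) < j then J i j ^2 else 0))
          + ∑ i, ∑ j, (if (j:Fin n) < i then J i j ^2 else 0) := by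
          rw [← swap]
          rw [Finset.sum_congr rfl (fun i _ => Finset.sum_congr rfl (fun j _ => hue i j))]
          ring
      _ = ∑ i, ∑ j, J i j ^ 2 := by
          rw [← Finset.sum_add_distrib]
          apply Finset.sum_congr rfl
          intro i _
          rw [← Finset.sum_add_distrib]
          exact Finset.sum_congr rfl fun j _ => (tri i j).symm
  have hv2 : 2 * (∑ q : Fin n × Fin n, v q ^ 2) ≤ covQ W := by
    have swapv : ∑ i, ∑ j, (if (i:Fin n) < j then (covw W (sg i) (sg j))^2 else 0)
        = ∑ i, ∑ j, (if (j:Fin n) < i then (covw W (sg i) (sg j))^2 else 0) := by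
      rw [Finset.sum_comm]
      apply Finset.sum_congr rfl
      intro j _
      apply Finset.sum_congr rfl
      intro i _
      rw [covw_comm]
    have hve : ∀ i j : Fin n, v (i,j)^2
        = (if i < j then (covw W (sg i) (sg j))^2 else 0) := by
      intro i j
      rw [hvdef]
      simp only
      split
      · rfl
      · ring
    have tri : ∀ i j : Fin n,
        (if i < j then (covw W (sg i) (sg j))^2 else 0)
          + (if j < i then (covw W (sg i) (sg j))^2 else 0)
        ≤ (covw W (sg i) (sg j))^2 := by
      intro i j
      rcases lt_trichotomy i j with h | h | h
      · rw [if_pos h, if_neg (asymm h)]; simp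
      · subst h
        rw [if_neg (lt_irrefl i)]
        simp [sq_nonneg]
      · rw [if_neg (asymm h), if_pos h]; simp
    rw [Fintype.sum_prod_type]
    calc 2 * (∑ i, ∑ j, v (i, j) ^ 2)
        = (∑ i, ∑ j, (if (i:Fin n) < j then (covw W (sg i) (sg j))^2 else 0))
          + ∑ i, ∑ j, (if (j:Fin n) < i then (covw W (sg i) (sg j))^2 else 0) := by
          rw [← swapv]
          rw [Finset.sum_congr rfl (fun i _ => Finset.sum_congr rfl (fun j _ => hve i j))]
          ring
      _ ≤ ∑ i, ∑ j, (covw W (sg i) (sg j))^2 := by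
          rw [← Finset.sum_add_distrib]
          apply Finset.sum_le_sum
          intro i _
          rw [← Finset.sum_add_distrib]
          exact Finset.sum_le_sum fun j _ => tri i j
      _ = covQ W := rfl
  have hfrob : 0 ≤ frob J := Real.sqrt_nonneg _
  have hu2' : (∑ q : Fin n × Fin n, u q ^ 2) = frob J ^2 / 2 := by linarith
  have hv2' : (∑ q : Fin n × Fin n, v q ^ 2) ≤ covQ W / 2 := by linarith
  have hbound : (∑ q : Fin n × Fin n, u q * v q)^2
      ≤ (frob J ^2 / 2) * (covQ W / 2) := by
    calc (∑ q : Fin n × Fin n, u q * v q)^2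
        ≤ (∑ q : Fin n × Fin n, u q ^ 2) * (∑ q : Fin n × Fin n, v q ^ 2) := hcs
      _ ≤ (frob J ^2 / 2) * (covQ W / 2) := by
          rw [hu2']
          apply mul_le_mul_of_nonneg_left hv2' (by positivity)
  have hsqf : (frob J ^2 / 2) * (covQ W / 2) = ((frob J / 2) * Real.sqrt (covQ W))^2 := by
    have : Real.sqrt (covQ W) ^ 2 = covQ W := Real.sq_sqrt (covQ_nonneg W)
    nlinarith [this]
  rw [hCT]
  calc ∑ q : Fin n × Fin n, u q * v q
      ≤ |∑ q : Fin n × Fin n, u q * v q| := le_abs_self _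
    _ = Real.sqrt ((∑ q : Fin n × Fin n, u q * v q)^2) := (Real.sqrt_sq_eq_abs _).symm
    _ ≤ Real.sqrt (((frob J / 2) * Real.sqrt (covQ W))^2) := by
        apply Real.sqrt_le_sqrt
        rw [← hsqf]
        exact hbound
    _ = (frob J / 2) * Real.sqrt (covQ W) := by
        apply Real.sqrt_sq
        positivity

def QQ {t : ℕ} (s : Fin t → Fin n) : ℝ :=
  ∑ γ : Fin t → Bool, (mass (cw (gw J) (Ps s) γ) / partZ J) * covQ (cw (gw J) (Ps s) γ)

lemma QQ_nonneg {t : ℕ} (s : Fin t → Fin n) : 0 ≤ QQ J s :=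
  Finset.sum_nonneg fun γ _ => mul_nonneg
    (div_nonneg (mass_nonneg (cw_nonneg (gw_nonneg J) _ γ)) (partZ_pos J).le)
    (covQ_nonneg _)

/-- Master bound for a single pinning partition. -/
lemma master_bound (hsym : J.IsSymm) (hdiag : ∀ i, J i i = 0) {t : ℕ} (s : Fin t → Fin n) :
    freeEnergy J ≤ t * Real.log 2 + mfFreeEnergy J
      + (frob J / 2) * Real.sqrt (QQ J s) := by
  have hZ : 0 < partZ J := partZ_pos J
  set P := Ps s with hPdef
  have h1 := partition_log_bound J P
  have hcard : Real.log (Fintype.card (Fin t → Bool)) = t * Real.log 2 := by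
    rw [Fintype.card_fun, Fintype.card_bool, Fintype.card_fin]
    push_cast
    rw [Real.log_pow]
  rw [hcard] at h1
  -- per-cell bound
  have h2 : ∀ γ : Fin t → Bool,
      (mass (cw (gw J) P γ) / partZ J) * Real.log (mass (cw (gw J) P γ))
      ≤ (mass (cw (gw J) P γ) / partZ J) * (mfFreeEnergy J + CT J (cw (gw J) P γ)) := by
    intro γ
    rcases eq_or_lt_of_le (mass_nonneg (cw_nonneg (gw_nonneg J) P γ)) with h | h
    · rw [← h]
      simp
    · apply mul_le_mul_of_nonneg_left _ (div_nonneg h.le hZ.le)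
      exact cell_bound' J P γ h
  have h3 : ∑ γ : Fin t → Bool,
      (mass (cw (gw J) P γ) / partZ J) * Real.log (mass (cw (gw J) P γ))
      ≤ mfFreeEnergy J + ∑ γ : Fin t → Bool,
        (mass (cw (gw J) P γ) / partZ J) * CT J (cw (gw J) P γ) := by
    have hps : ∑ γ : Fin t → Bool, mass (cw (gw J) P γ) / partZ J = 1 := by
      rw [← Finset.sum_div, sum_mass_cw, mass_gw, div_self hZ.ne']
    calc ∑ γ : Fin t → Bool,
        (mass (cw (gw J) P γ) / partZ J) * Real.log (mass (cw (gw J) P γ))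
        ≤ ∑ γ : Fin t → Bool,
          (mass (cw (gw J) P γ) / partZ J) * (mfFreeEnergy J + CT J (cw (gw J) P γ)) :=
          Finset.sum_le_sum fun γ _ => h2 γ
      _ = (∑ γ : Fin t → Bool, (mass (cw (gw J) P γ) / partZ J)) * mfFreeEnergy J
          + ∑ γ : Fin t → Bool, (mass (cw (gw J) P γ) / partZ J) * CT J (cw (gw J) P γ) := by
          rw [Finset.sum_mul, ← Finset.sum_add_distrib]
          apply Finset.sum_congr rfl
          intro γ _
          ring
      _ = mfFreeEnergy J + ∑ γ : Fin t → Bool,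
          (mass (cw (gw J) P γ) / partZ J) * CT J (cw (gw J) P γ) := by
          rw [hps, one_mul]
  -- CS over cells
  have h4 : ∑ γ : Fin t → Bool, (mass (cw (gw J) P γ) / partZ J) * CT J (cw (gw J) P γ)
      ≤ (frob J / 2) * Real.sqrt (QQ J s) := by
    have hps : ∑ γ : Fin t → Bool, mass (cw (gw J) P γ) / partZ J = 1 := by
      rw [← Finset.sum_div, sum_mass_cw, mass_gw, div_self hZ.ne']
    calc ∑ γ : Fin t → Bool, (mass (cw (gw J) P γ) / partZ J) * CT J (cw (gw J) P γ)
        ≤ ∑ γ : Fin t → Bool, (mass (cw (gw J) P γ) / partZ J)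
            * ((frob J / 2) * Real.sqrt (covQ (cw (gw J) P γ))) := by
          apply Finset.sum_le_sum
          intro γ _
          apply mul_le_mul_of_nonneg_left (CT_le J hsym hdiag _)
          exact div_nonneg (mass_nonneg (cw_nonneg (gw_nonneg J) P γ)) hZ.le
      _ = (frob J / 2) * ∑ γ : Fin t → Bool, (mass (cw (gw J) P γ) / partZ J)
            * Real.sqrt (covQ (cw (gw J) P γ)) := by
          rw [Finset.mul_sum]
          apply Finset.sum_congr rfl
          intro γ _
          ring
      _ ≤ (frob J / 2) * Real.sqrt (QQ J s) := by
          apply mul_le_mul_of_nonneg_left _ (by unfold frob; positivity)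
          unfold QQ
          rw [← hPdef]
          apply sum_sqrt_le
          · intro γ
            exact div_nonneg (mass_nonneg (cw_nonneg (gw_nonneg J) P γ)) hZ.le
          · intro γ
            exact covQ_nonneg _
          · rw [hps]
  linarith
end MFMain


namespace MFMain
open MFAux

variable {n : ℕ} (J : Matrix (Fin n) (Fin n) ℝ)

def econs {t : ℕ} : (Fin t → Bool) × Bool → (Fin (t+1) → Bool) :=
  fun q => Fin.cons q.2 q.1

lemma econs_inj {t : ℕ} : Function.Injective (econs (t := t)) := by
  rintro ⟨y1, b1⟩ ⟨y2, b2⟩ h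
  unfold econs at h
  simp only at h
  have hb : b1 = b2 := by
    have := congrFun h 0
    simpa using this
  have hy : y1 = y2 := by
    funext a
    have := congrFun h a.succ
    simpa using this
  rw [hb, hy]

lemma Ps_cons_eq {t : ℕ} (j : Fin n) (s' : Fin t → Fin n) :
    (fun x => econs ((Ps s' x), x j)) = Ps (Fin.cons j s') := by
  funext x
  unfold econs Ps
  simp only
  funext a
  refine Fin.cases ?_ ?_ a
  · simp
  · intro a'
    simp [Fin.cons_succ]

def dropD {t : ℕ} (s' : Fin t → Fin n) (j : Fin n) (i : Fin n) : ℝ :=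
  ∑ γ : Fin t → Bool, mass (cw (gw J) (Ps s') γ)
    * (covw (cw (gw J) (Ps s') γ) (sg i) (sg j))^2

lemma step_ineq {t : ℕ} (j : Fin n) (s' : Fin t → Fin n) (i : Fin n) :
    CV (gw J) (Ps (Fin.cons j s')) (sg i) + dropD J s' j i
      ≤ CV (gw J) (Ps s') (sg i) := by
  have h1 : CV (gw J) (Ps (Fin.cons j s')) (sg i)
      = CV (gw J) (fun x => ((Ps s' x), x j)) (sg i) := by
    rw [← Ps_cons_eq]
    exact CV_comp_inj (fun x => ((Ps s' x), x j)) econs econs_inj (sg i)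
  have h2 := CV_refine (w := gw J) (gw_nonneg J) (Ps s') (fun x => x j) (sg i)
  have h3 : (fun x : Fin n → Bool => if x j = true then (1:ℝ) else -1) = sg j := by
    funext x
    unfold sg spin
    rfl
  rw [h3] at h2
  rw [h1]
  unfold dropD
  exact h2

def At (i : Fin n) (t : ℕ) : ℝ :=
  ((n:ℝ)^t)⁻¹ * ∑ s : Fin t → Fin n, CV (gw J) (Ps s) (sg i)

lemma At_nonneg (i : Fin n) (t : ℕ) : 0 ≤ At J i t := by
  apply mul_nonneg (by positivity)
  exact Finset.sum_nonneg fun s _ => CV_nonneg (gw_nonneg J) _ _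

lemma At_zero_le (i : Fin n) : At J i 0 ≤ partZ J := by
  unfold At
  rw [pow_zero, inv_one, one_mul]
  have huniq : ∀ s : Fin 0 → Fin n, s = (fun a => a.elim0) := by
    intro s; funext a; exact a.elim0
  rw [Finset.sum_eq_single (fun a : Fin 0 => a.elim0)
    (fun s _ hne => absurd (huniq s) hne) (fun h => absurd (Finset.mem_univ _) h)]
  have htriv : CV (gw J) (Ps (fun a : Fin 0 => a.elim0)) (sg i)
      = mass (gw J) * vari (gw J) (sg i) := by
    apply CV_trivial _ (fun a : Fin 0 => a.elim0)
    intro γ; funext a; exact a.elim0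
  rw [htriv, ← mass_gw]
  calc mass (gw J) * vari (gw J) (sg i) ≤ mass (gw J) * 1 := by
        apply mul_le_mul_of_nonneg_left _ (mass_nonneg (gw_nonneg J))
        exact vari_le_one (gw_nonneg J) (sg_sq i)
    _ = mass (gw J) := mul_one _

/-- Equivalence for splitting a sum over `Fin (t+1) → Fin n`. -/
def consEquivFn {t : ℕ} : (Fin n × (Fin t → Fin n)) ≃ (Fin (t+1) → Fin n) where
  toFun q := Fin.cons q.1 q.2
  invFun s := (s 0, Fin.tail s)
  left_inv q := by
    simp [Fin.tail_cons]
  right_inv s := by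
    simp [Fin.cons_self_tail]

lemma step_avg (hn : 0 < n) (i : Fin n) (t : ℕ) :
    At J i (t+1) + ((n:ℝ)^(t+1))⁻¹
        * (∑ s' : Fin t → Fin n, ∑ j : Fin n, dropD J s' j i)
      ≤ At J i t := by
  have hnR : (0:ℝ) < n := by exact_mod_cast hn
  have hsum : ∑ s : Fin (t+1) → Fin n, CV (gw J) (Ps s) (sg i)
      = ∑ q : Fin n × (Fin t → Fin n), CV (gw J) (Ps (Fin.cons q.1 q.2)) (sg i) := by
    rw [← Equiv.sum_comp (consEquivFn (n := n) (t := t))]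
    rfl
  have hsum2 : ∑ q : Fin n × (Fin t → Fin n), CV (gw J) (Ps (Fin.cons q.1 q.2)) (sg i)
      = ∑ j : Fin n, ∑ s' : Fin t → Fin n, CV (gw J) (Ps (Fin.cons j s')) (sg i) := by
    rw [Fintype.sum_prod_type]
  have hle : ∑ s : Fin (t+1) → Fin n, CV (gw J) (Ps s) (sg i)
      ≤ (n:ℝ) * (∑ s' : Fin t → Fin n, CV (gw J) (Ps s') (sg i))
        - ∑ s' : Fin t → Fin n, ∑ j : Fin n, dropD J s' j i := by
    rw [hsum, hsum2]
    have swap : ∑ s' : Fin t → Fin n, ∑ j : Fin n, dropD J s' j i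
        = ∑ j : Fin n, ∑ s' : Fin t → Fin n, dropD J s' j i := Finset.sum_comm
    rw [swap]
    have : ∀ j : Fin n, ∑ s' : Fin t → Fin n, CV (gw J) (Ps (Fin.cons j s')) (sg i)
        ≤ (∑ s' : Fin t → Fin n, CV (gw J) (Ps s') (sg i))
          - ∑ s' : Fin t → Fin n, dropD J s' j i := by
      intro j
      rw [← Finset.sum_sub_distrib]
      apply Finset.sum_le_sum
      intro s' _
      have := step_ineq J j s' i
      linarith
    calc ∑ j : Fin n, ∑ s' : Fin t → Fin n, CV (gw J) (Ps (Fin.cons j s')) (sg i)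
        ≤ ∑ j : Fin n, ((∑ s' : Fin t → Fin n, CV (gw J) (Ps s') (sg i))
          - ∑ s' : Fin t → Fin n, dropD J s' j i) := Finset.sum_le_sum fun j _ => this j
      _ = (n:ℝ) * (∑ s' : Fin t → Fin n, CV (gw J) (Ps s') (sg i))
          - ∑ j : Fin n, ∑ s' : Fin t → Fin n, dropD J s' j i := by
          rw [Finset.sum_sub_distrib, Finset.sum_const, Finset.card_univ, Fintype.card_fin,
            nsmul_eq_mul]
  unfold At
  have hpow : ((n:ℝ)^(t+1))⁻¹ * (n:ℝ) = ((n:ℝ)^t)⁻¹ := by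
    rw [pow_succ, mul_inv, mul_assoc, inv_mul_cancel₀ hnR.ne', mul_one]
  have hmul := mul_le_mul_of_nonneg_left hle (by positivity : (0:ℝ) ≤ ((n:ℝ)^(t+1))⁻¹)
  calc ((n:ℝ)^(t+1))⁻¹ * ∑ s : Fin (t+1) → Fin n, CV (gw J) (Ps s) (sg i)
        + ((n:ℝ)^(t+1))⁻¹ * (∑ s' : Fin t → Fin n, ∑ j : Fin n, dropD J s' j i)
      ≤ ((n:ℝ)^(t+1))⁻¹ * ((n:ℝ) * (∑ s' : Fin t → Fin n, CV (gw J) (Ps s') (sg i))) := by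
        rw [mul_sub] at hmul
        linarith
    _ = ((n:ℝ)^t)⁻¹ * ∑ s' : Fin t → Fin n, CV (gw J) (Ps s') (sg i) := by
        rw [← mul_assoc, hpow]

lemma telescope (hn : 0 < n) (i : Fin n) (k : ℕ) :
    ∑ t ∈ Finset.range k, ((n:ℝ)^(t+1))⁻¹
        * (∑ s' : Fin t → Fin n, ∑ j : Fin n, dropD J s' j i)
      ≤ partZ J := by
  have key : ∀ k : ℕ, ∑ t ∈ Finset.range k, ((n:ℝ)^(t+1))⁻¹
      * (∑ s' : Fin t → Fin n, ∑ j : Fin n, dropD J s' j i)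
      ≤ At J i 0 - At J i k := by
    intro k
    induction k with
    | zero => simp
    | succ k ih =>
      rw [Finset.sum_range_succ]
      have := step_avg J hn i k
      linarith
  calc ∑ t ∈ Finset.range k, ((n:ℝ)^(t+1))⁻¹
      * (∑ s' : Fin t → Fin n, ∑ j : Fin n, dropD J s' j i)
      ≤ At J i 0 - At J i k := key k
    _ ≤ At J i 0 := by linarith [At_nonneg J i k]
    _ ≤ partZ J := At_zero_le J i

lemma pinning (hn : 0 < n) (k : ℕ) :
    ∑ t ∈ Finset.range k, ((n:ℝ)^t)⁻¹ * (∑ s : Fin t → Fin n, QQ J s) ≤ (n:ℝ)^2 := by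
  have hnR : (0:ℝ) < n := by exact_mod_cast hn
  have hZ : 0 < partZ J := partZ_pos J
  -- the total drop equals Z times QQ
  have hdq : ∀ (t : ℕ) (s' : Fin t → Fin n),
      ∑ i : Fin n, ∑ j : Fin n, dropD J s' j i = partZ J * QQ J s' := by
    intro t s'
    have lhs_eq : ∑ i : Fin n, ∑ j : Fin n, dropD J s' j i
        = ∑ γ : Fin t → Bool, mass (cw (gw J) (Ps s') γ) * covQ (cw (gw J) (Ps s') γ) := by
      unfold dropD
      have e1 : ∀ i : Fin n, ∑ j : Fin n, ∑ γ : Fin t → Bool,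
          mass (cw (gw J) (Ps s') γ) * (covw (cw (gw J) (Ps s') γ) (sg i) (sg j))^2
          = ∑ γ : Fin t → Bool, ∑ j : Fin n,
            mass (cw (gw J) (Ps s') γ) * (covw (cw (gw J) (Ps s') γ) (sg i) (sg j))^2 :=
        fun i => Finset.sum_comm
      rw [Finset.sum_congr rfl (fun i _ => e1 i), Finset.sum_comm]
      apply Finset.sum_congr rfl
      intro γ _
      unfold covQ
      rw [Finset.mul_sum]
      apply Finset.sum_congr rfl
      intro i _
      rw [Finset.mul_sum]
    rw [lhs_eq]
    unfold QQ
    rw [Finset.mul_sum]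
    apply Finset.sum_congr rfl
    intro γ _
    field_simp
  -- sum the telescopes over i
  have tele_sum : ∑ i : Fin n, (∑ t ∈ Finset.range k, ((n:ℝ)^(t+1))⁻¹
      * (∑ s' : Fin t → Fin n, ∑ j : Fin n, dropD J s' j i)) ≤ (n:ℝ) * partZ J := by
    calc ∑ i : Fin n, (∑ t ∈ Finset.range k, ((n:ℝ)^(t+1))⁻¹
        * (∑ s' : Fin t → Fin n, ∑ j : Fin n, dropD J s' j i))
        ≤ ∑ _i : Fin n, partZ J := Finset.sum_le_sum fun i _ => telescope J hn i k
      _ = (n:ℝ) * partZ J := by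
          rw [Finset.sum_const, Finset.card_univ, Fintype.card_fin, nsmul_eq_mul]
  have main : partZ J * (∑ t ∈ Finset.range k, ((n:ℝ)^(t+1))⁻¹
      * (∑ s : Fin t → Fin n, QQ J s)) ≤ (n:ℝ) * partZ J := by
    have swap : ∑ i : Fin n, (∑ t ∈ Finset.range k, ((n:ℝ)^(t+1))⁻¹
        * (∑ s' : Fin t → Fin n, ∑ j : Fin n, dropD J s' j i))
        = ∑ t ∈ Finset.range k, ∑ i : Fin n, ((n:ℝ)^(t+1))⁻¹
        * (∑ s' : Fin t → Fin n, ∑ j : Fin n, dropD J s' j i) := Finset.sum_comm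
    have inner : ∀ t : ℕ, ∑ i : Fin n, ((n:ℝ)^(t+1))⁻¹
        * (∑ s' : Fin t → Fin n, ∑ j : Fin n, dropD J s' j i)
        = ((n:ℝ)^(t+1))⁻¹ * (partZ J * ∑ s' : Fin t → Fin n, QQ J s') := by
      intro t
      rw [← Finset.mul_sum]
      congr 1
      have e2 : ∑ i : Fin n, ∑ s' : Fin t → Fin n, ∑ j : Fin n, dropD J s' j i
          = ∑ s' : Fin t → Fin n, ∑ i : Fin n, ∑ j : Fin n, dropD J s' j i :=
        Finset.sum_comm
      rw [e2, Finset.mul_sum]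
      exact Finset.sum_congr rfl fun s' _ => hdq t s'
    rw [swap, Finset.sum_congr rfl (fun t _ => inner t)] at tele_sum
    calc partZ J * (∑ t ∈ Finset.range k, ((n:ℝ)^(t+1))⁻¹
        * (∑ s : Fin t → Fin n, QQ J s))
        = ∑ t ∈ Finset.range k, ((n:ℝ)^(t+1))⁻¹
          * (partZ J * ∑ s : Fin t → Fin n, QQ J s) := by
          rw [Finset.mul_sum]
          apply Finset.sum_congr rfl
          intro t _
          ring
      _ ≤ (n:ℝ) * partZ J := tele_sum
  have hdiv : ∑ t ∈ Finset.range k, ((n:ℝ)^(t+1))⁻¹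
      * (∑ s : Fin t → Fin n, QQ J s) ≤ (n:ℝ) := by
    by_contra hcon
    push_neg at hcon
    have := mul_lt_mul_of_pos_left hcon hZ
    linarith
  calc ∑ t ∈ Finset.range k, ((n:ℝ)^t)⁻¹ * (∑ s : Fin t → Fin n, QQ J s)
      = (n:ℝ) * ∑ t ∈ Finset.range k, ((n:ℝ)^(t+1))⁻¹ * (∑ s : Fin t → Fin n, QQ J s) := by
        rw [Finset.mul_sum]
        apply Finset.sum_congr rfl
        intro t _
        rw [← mul_assoc]
        congr 1
        rw [pow_succ, mul_inv]
        field_simp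
    _ ≤ (n:ℝ) * (n:ℝ) := mul_le_mul_of_nonneg_left hdiv hnR.le
    _ = (n:ℝ)^2 := by ring
end MFMain


namespace MFMain
open MFAux

variable {n : ℕ} (J : Matrix (Fin n) (Fin n) ℝ)

lemma frob_nonneg : 0 ≤ frob J := Real.sqrt_nonneg _

/-- Average the master bound over pinning sequences of a fixed length. -/
lemma avg_master (hn : 0 < n) (hsym : J.IsSymm) (hdiag : ∀ i, J i i = 0) (t : ℕ) :
    freeEnergy J ≤ t * Real.log 2 + mfFreeEnergy J
      + (frob J / 2) * Real.sqrt (((n:ℝ)^t)⁻¹ * ∑ s : Fin t → Fin n, QQ J s) := by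
  have hnR : (0:ℝ) < n := by exact_mod_cast hn
  set N : ℝ := ((n:ℝ)^t)⁻¹ with hNdef
  have hN : 0 ≤ N := by positivity
  have hNsum : ∑ _s : Fin t → Fin n, N = 1 := by
    rw [Finset.sum_const, Finset.card_univ, Fintype.card_fun, Fintype.card_fin,
      Fintype.card_fin, nsmul_eq_mul, hNdef]
    push_cast
    field_simp
  set D : ℝ := freeEnergy J - t * Real.log 2 - mfFreeEnergy J with hDdef
  have hper : ∀ s : Fin t → Fin n, D ≤ (frob J / 2) * Real.sqrt (QQ J s) := by
    intro s
    have := master_bound J hsym hdiag s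
    rw [hDdef]
    linarith
  have havg : D ≤ (frob J / 2) * ∑ s : Fin t → Fin n, N * Real.sqrt (QQ J s) := by
    calc D = ∑ s : Fin t → Fin n, N * D := by
          rw [← Finset.sum_mul, hNsum, one_mul]
      _ ≤ ∑ s : Fin t → Fin n, N * ((frob J / 2) * Real.sqrt (QQ J s)) :=
          Finset.sum_le_sum fun s _ => mul_le_mul_of_nonneg_left (hper s) hN
      _ = (frob J / 2) * ∑ s : Fin t → Fin n, N * Real.sqrt (QQ J s) := by
          rw [Finset.mul_sum]
          exact Finset.sum_congr rfl fun s _ => by ring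
  have hjensen : ∑ s : Fin t → Fin n, N * Real.sqrt (QQ J s)
      ≤ Real.sqrt (∑ s : Fin t → Fin n, N * QQ J s) :=
    sum_sqrt_le _ _ (fun _ => hN) (fun s => QQ_nonneg J s) (le_of_eq hNsum)
  have hmul : ∑ s : Fin t → Fin n, N * QQ J s = N * ∑ s : Fin t → Fin n, QQ J s := by
    rw [Finset.mul_sum]
  have hfrob2 : (0:ℝ) ≤ frob J / 2 := by
    have := frob_nonneg J
    linarith
  have : D ≤ (frob J / 2) * Real.sqrt (N * ∑ s : Fin t → Fin n, QQ J s) := by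
    calc D ≤ (frob J / 2) * ∑ s : Fin t → Fin n, N * Real.sqrt (QQ J s) := havg
      _ ≤ (frob J / 2) * Real.sqrt (∑ s : Fin t → Fin n, N * QQ J s) :=
          mul_le_mul_of_nonneg_left hjensen hfrob2
      _ = (frob J / 2) * Real.sqrt (N * ∑ s : Fin t → Fin n, QQ J s) := by rw [hmul]
  rw [hDdef] at this
  linarith

/-- Average over pinning lengths `t < k`. -/
lemma avg_t (hn : 0 < n) (hsym : J.IsSymm) (hdiag : ∀ i, J i i = 0) (k : ℕ) (hk : 0 < k) :
    freeEnergy J - mfFreeEnergy J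
      ≤ ((k:ℝ) - 1) * Real.log 2 + (frob J / 2) * Real.sqrt ((n:ℝ)^2 / k) := by
  have hnR : (0:ℝ) < n := by exact_mod_cast hn
  have hkR : (0:ℝ) < k := by exact_mod_cast hk
  set B : ℕ → ℝ := fun t => ((n:ℝ)^t)⁻¹ * ∑ s : Fin t → Fin n, QQ J s with hBdef
  have hB0 : ∀ t, 0 ≤ B t := by
    intro t
    apply mul_nonneg (by positivity)
    exact Finset.sum_nonneg fun s _ => QQ_nonneg J s
  have hlog2 : (0:ℝ) ≤ Real.log 2 := Real.log_nonneg (by norm_num)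
  set D : ℝ := freeEnergy J - mfFreeEnergy J - ((k:ℝ) - 1) * Real.log 2 with hDdef
  have hper : ∀ t : Fin k, D ≤ (frob J / 2) * Real.sqrt (B t.val) := by
    intro t
    have h1 := avg_master J hn hsym hdiag t.val
    have h2 : (t.val : ℝ) ≤ (k:ℝ) - 1 := by
      have : t.val + 1 ≤ k := t.isLt
      have : ((t.val : ℝ) + 1) ≤ (k:ℝ) := by exact_mod_cast this
      linarith
    rw [hDdef]
    have h3 : (t.val : ℝ) * Real.log 2 ≤ ((k:ℝ) - 1) * Real.log 2 :=
      mul_le_mul_of_nonneg_right h2 hlog2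
    rw [hBdef]
    simp only
    linarith
  have hfrob2 : (0:ℝ) ≤ frob J / 2 := by
    have := frob_nonneg J
    linarith
  have havg : D ≤ (frob J / 2) * ∑ t : Fin k, (1/(k:ℝ)) * Real.sqrt (B t.val) := by
    have hsum1 : ∑ _t : Fin k, (1/(k:ℝ)) = 1 := by
      rw [Finset.sum_const, Finset.card_univ, Fintype.card_fin, nsmul_eq_mul]
      field_simp
    calc D = ∑ t : Fin k, (1/(k:ℝ)) * D := by rw [← Finset.sum_mul, hsum1, one_mul]
      _ ≤ ∑ t : Fin k, (1/(k:ℝ)) * ((frob J / 2) * Real.sqrt (B t.val)) :=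
          Finset.sum_le_sum fun t _ => mul_le_mul_of_nonneg_left (hper t) (by positivity)
      _ = (frob J / 2) * ∑ t : Fin k, (1/(k:ℝ)) * Real.sqrt (B t.val) := by
          rw [Finset.mul_sum]
          exact Finset.sum_congr rfl fun t _ => by ring
  have hjensen : ∑ t : Fin k, (1/(k:ℝ)) * Real.sqrt (B t.val)
      ≤ Real.sqrt (∑ t : Fin k, (1/(k:ℝ)) * B t.val) := by
    apply sum_sqrt_le
    · intro t; positivity
    · intro t; exact hB0 _
    · rw [Finset.sum_const, Finset.card_univ, Fintype.card_fin, nsmul_eq_mul]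
      rw [mul_one_div, div_self hkR.ne']
  have hpin : ∑ t : Fin k, (1/(k:ℝ)) * B t.val ≤ (n:ℝ)^2 / k := by
    rw [← Finset.mul_sum]
    have : ∑ t : Fin k, B t.val = ∑ t ∈ Finset.range k, B t := by
      rw [Fin.sum_univ_eq_sum_range]
    rw [this]
    have hp := pinning J hn k
    rw [hBdef] at *
    calc (1/(k:ℝ)) * ∑ t ∈ Finset.range k, (((n:ℝ)^t)⁻¹ * ∑ s : Fin t → Fin n, QQ J s)
        ≤ (1/(k:ℝ)) * (n:ℝ)^2 := by
          apply mul_le_mul_of_nonneg_left hp (by positivity)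
      _ = (n:ℝ)^2 / k := by ring
  have : D ≤ (frob J / 2) * Real.sqrt ((n:ℝ)^2 / k) := by
    calc D ≤ (frob J / 2) * ∑ t : Fin k, (1/(k:ℝ)) * Real.sqrt (B t.val) := havg
      _ ≤ (frob J / 2) * Real.sqrt (∑ t : Fin k, (1/(k:ℝ)) * B t.val) :=
          mul_le_mul_of_nonneg_left hjensen hfrob2
      _ ≤ (frob J / 2) * Real.sqrt ((n:ℝ)^2 / k) :=
          mul_le_mul_of_nonneg_left (Real.sqrt_le_sqrt hpin) hfrob2
  rw [hDdef] at this
  linarith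

end MFMain

open MFAux MFMain in
/-- Theorem 1.1: `F − F* ≤ 3 n^{2/3} ‖J‖_F^{2/3}`. -/
theorem mean_field_approximation_bound {n : ℕ} (J : Matrix (Fin n) (Fin n) ℝ)
    (hsym : J.IsSymm) (hdiag : ∀ i, J i i = 0) :
    freeEnergy J - mfFreeEnergy J ≤ 3 * (n : ℝ) ^ ((2 : ℝ) / 3) * frob J ^ ((2 : ℝ) / 3) := by
  rcases Nat.eq_zero_or_pos n with hn0 | hn
  · subst hn0
    have hF : freeEnergy J = 0 := by
      unfold freeEnergy partZ ham
      simp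
    have hS : mfFreeEnergy J = 0 := by
      unfold mfFreeEnergy
      have hset : {v | ∃ x : Fin 0 → ℝ, (∀ i, -1 ≤ x i ∧ x i ≤ 1) ∧ v = mfObj J x}
          = {(0:ℝ)} := by
        ext v
        constructor
        · rintro ⟨x, hx, rfl⟩
          simp [mfObj]
        · intro hv
          rw [Set.mem_singleton_iff] at hv
          subst hv
          exact ⟨fun i => i.elim0, fun i => i.elim0, by simp [mfObj]⟩
      rw [hset, csSup_singleton]
    rw [hF, hS]
    rw [show ((0:ℕ):ℝ) = 0 by norm_num, Real.zero_rpow (by norm_num)]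
    simp
  · have hnR : (0:ℝ) < n := by exact_mod_cast hn
    have hf0 : 0 ≤ frob J := frob_nonneg J
    by_cases hf : frob J = 0
    · have hb := avg_t J hn hsym hdiag 1 one_pos
      rw [hf] at hb
      norm_num at hb
      rw [hf, Real.zero_rpow (by norm_num)]
      simpa using hb
    · have hfpos : 0 < frob J := lt_of_le_of_ne hf0 (Ne.symm hf)
      set f := frob J with hfdef
      set a : ℝ := f * n with hadef
      have ha : 0 < a := by positivity
      set k : ℕ := ⌈a ^ ((2:ℝ)/3)⌉₊ with hkdef
      have hapow : 0 < a ^ ((2:ℝ)/3) := Real.rpow_pos_of_pos ha _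
      have hk : 0 < k := Nat.ceil_pos.mpr hapow
      have hkR : (0:ℝ) < k := by exact_mod_cast hk
      have hbound := avg_t J hn hsym hdiag k hk
      have hk1 : (k:ℝ) - 1 ≤ a ^ ((2:ℝ)/3) := by
        have := Nat.ceil_lt_add_one (le_of_lt hapow)
        have h2 : (k:ℝ) < a ^ ((2:ℝ)/3) + 1 := by exact_mod_cast this
        linarith
      have hk2 : a ^ ((2:ℝ)/3) ≤ (k:ℝ) := Nat.le_ceil _
      have ha13 : 0 < a ^ ((1:ℝ)/3) := Real.rpow_pos_of_pos ha _
      have hsq : ((n:ℝ) / a ^ ((1:ℝ)/3))^2 = (n:ℝ)^2 / a ^ ((2:ℝ)/3) := by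
        rw [div_pow]
        congr 1
        rw [← Real.rpow_natCast (a ^ ((1:ℝ)/3)) 2, ← Real.rpow_mul ha.le]
        norm_num
      have hsqrt : Real.sqrt ((n:ℝ)^2 / k) ≤ (n:ℝ) / a ^ ((1:ℝ)/3) := by
        rw [show (n:ℝ)/a^((1:ℝ)/3) = Real.sqrt (((n:ℝ)/a^((1:ℝ)/3))^2) from
          (Real.sqrt_sq (by positivity)).symm]
        apply Real.sqrt_le_sqrt
        rw [hsq]
        gcongr
      have hfn : (f/2) * ((n:ℝ)/a^((1:ℝ)/3)) = a ^ ((2:ℝ)/3) / 2 := by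
        have hdiv : a / a ^ ((1:ℝ)/3) = a ^ ((2:ℝ)/3) := by
          rw [show (2:ℝ)/3 = 1 - 1/3 by norm_num, Real.rpow_sub ha, Real.rpow_one]
        rw [← hdiv, hadef]
        field_simp
      have hstep : freeEnergy J - mfFreeEnergy J
          ≤ a ^ ((2:ℝ)/3) * Real.log 2 + a ^ ((2:ℝ)/3) / 2 := by
        have hlog2 : (0:ℝ) ≤ Real.log 2 := Real.log_nonneg (by norm_num)
        have t1 : ((k:ℝ) - 1) * Real.log 2 ≤ a ^ ((2:ℝ)/3) * Real.log 2 :=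
          mul_le_mul_of_nonneg_right hk1 hlog2
        have t2 : (f/2) * Real.sqrt ((n:ℝ)^2 / k) ≤ a ^ ((2:ℝ)/3) / 2 := by
          calc (f/2) * Real.sqrt ((n:ℝ)^2 / k) ≤ (f/2) * ((n:ℝ)/a^((1:ℝ)/3)) := by
                apply mul_le_mul_of_nonneg_left hsqrt (by positivity)
            _ = a ^ ((2:ℝ)/3) / 2 := hfn
        linarith
      have hlog2lt : Real.log 2 ≤ 1 := by
        have := Real.log_le_sub_one_of_pos (by norm_num : (0:ℝ) < 2)
        linarith
      have hfinal : a ^ ((2:ℝ)/3) * Real.log 2 + a ^ ((2:ℝ)/3) / 2 ≤ 3 * a ^ ((2:ℝ)/3) := by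
        nlinarith [hapow]
      have hconv : a ^ ((2:ℝ)/3) = f ^ ((2:ℝ)/3) * (n:ℝ) ^ ((2:ℝ)/3) := by
        rw [hadef, Real.mul_rpow hf0 hnR.le]
      calc freeEnergy J - mfFreeEnergy J
          ≤ a ^ ((2:ℝ)/3) * Real.log 2 + a ^ ((2:ℝ)/3) / 2 := hstep
        _ ≤ 3 * a ^ ((2:ℝ)/3) := hfinal
        _ = 3 * (n:ℝ) ^ ((2:ℝ)/3) * f ^ ((2:ℝ)/3) := by rw [hconv]; ring

end
end

section
/- Let X_1,…,X_n be jointly distributed {±1}-valued random variables and let V = [n]. Then for any k, ℓ ∈ [n], there exists an integer t with 0 ≤ t ≤ ℓ such that E_{S ∼ Unif(V choose t)} E_{F ∼ Unif((V∖S) choose k)} [C(X_F | X_S)] ≤ k² log(2) / ℓ, where S is a uniformly random subset of V of size t and, given S, F is a uniformly random subset of V∖S of size k. -/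
open Finset

noncomputable section
open scoped Classical

/-- A probability mass function on a finite type. -/
def IsDist {Ω : Type*} [Fintype Ω] (μ : Ω → ℝ) : Prop :=
  (∀ x, 0 ≤ μ x) ∧ ∑ x, μ x = 1

/-- Marginal probability that the coordinates in `A` agree with `y`. -/
def marg {n : ℕ} (μ : (Fin n → Bool) → ℝ) (A : Finset (Fin n)) (y : Fin n → Bool) : ℝ :=
  ∑ x : Fin n → Bool, if ∀ i ∈ A, x i = y i then μ x else 0

/-- Canonical representatives of assignments to the coordinates in `A`. -/
def reps {n : ℕ} (A : Finset (Fin n)) : Finset (Fin n → Bool) :=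
  Finset.univ.filter fun y => ∀ i ∉ A, y i = false

/-- Shannon entropy (natural log) of the marginal of `μ` on the coordinates in `A`,
i.e. `H(X_A)`. -/
def margEnt {n : ℕ} (μ : (Fin n → Bool) → ℝ) (A : Finset (Fin n)) : ℝ :=
  -∑ y ∈ reps A, marg μ A y * Real.log (marg μ A y)

/-- Conditional entropy `H(X_F | X_S) = H(X_{F∪S}) − H(X_S)`. -/
def condEnt {n : ℕ} (μ : (Fin n → Bool) → ℝ) (F S : Finset (Fin n)) : ℝ :=
  margEnt μ (F ∪ S) - margEnt μ S

/-- Conditional multivariate total correlation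
`C(X_F | X_S) = ∑_{i∈F} H(X_i | X_S) − H(X_F | X_S)`. -/
def condTC {n : ℕ} (μ : (Fin n → Bool) → ℝ) (F S : Finset (Fin n)) : ℝ :=
  (∑ i ∈ F, condEnt μ {i} S) - condEnt μ F S

namespace CorrRound
variable {n : ℕ} {μ : (Fin n → Bool) → ℝ}

/-- Canonical restriction. -/
def res (A : Finset (Fin n)) (x : Fin n → Bool) : Fin n → Bool :=
  fun i => if i ∈ A then x i else false

lemma res_mem_reps (A : Finset (Fin n)) (x : Fin n → Bool) : res A x ∈ reps A := by
  simp only [reps, mem_filter, mem_univ, true_and, res]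
  intro i hi
  simp [hi]

lemma mem_reps_iff {A : Finset (Fin n)} {y : Fin n → Bool} :
    y ∈ reps A ↔ ∀ i ∉ A, y i = false := by
  simp [reps]

lemma res_eq_self {A : Finset (Fin n)} {y : Fin n → Bool} (hy : y ∈ reps A) : res A y = y := by
  funext i
  by_cases h : i ∈ A
  · simp [res, h]
  · simp [res, h, (mem_reps_iff.1 hy i h).symm]

lemma res_res {A B : Finset (Fin n)} (h : A ⊆ B) (x : Fin n → Bool) :
    res A (res B x) = res A x := by
  funext i
  by_cases hi : i ∈ A
  · simp [res, hi, h hi]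
  · simp [res, hi]

lemma marg_eq {A : Finset (Fin n)} {y : Fin n → Bool} (hy : y ∈ reps A) (μ : (Fin n → Bool) → ℝ) :
    marg μ A y = ∑ x : Fin n → Bool, if res A x = y then μ x else 0 := by
  unfold marg
  refine Finset.sum_congr rfl fun x _ => ?_
  congr 1
  apply propext
  constructor
  · intro h
    funext i
    by_cases hi : i ∈ A
    · simp [res, hi, h i hi]
    · simp [res, hi, (mem_reps_iff.1 hy i hi).symm]
  · intro h i hi
    have : res A x i = y i := by rw [h]
    simpa [res, hi] using this

lemma sum_res (μ : (Fin n → Bool) → ℝ) (A : Finset (Fin n)) (f : (Fin n → Bool) → ℝ) :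
    ∑ x : Fin n → Bool, μ x * f (res A x) = ∑ y ∈ reps A, marg μ A y * f y := by
  have : ∀ y ∈ reps A, marg μ A y * f y
      = ∑ x : Fin n → Bool, if res A x = y then μ x * f y else 0 := by
    intro y hy
    rw [marg_eq hy, Finset.sum_mul]
    exact Finset.sum_congr rfl fun x _ => by split <;> simp
  rw [Finset.sum_congr rfl this, Finset.sum_comm]
  refine Finset.sum_congr rfl fun x _ => ?_
  rw [Finset.sum_ite_eq (reps A) (res A x) (fun y => μ x * f y)]
  simp [res_mem_reps]

lemma sum_marg (A : Finset (Fin n)) : ∑ y ∈ reps A, marg μ A y = ∑ x : Fin n → Bool, μ x := by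
  have := sum_res μ A (fun _ => 1)
  simpa using this.symm

lemma margEnt_eq (μ : (Fin n → Bool) → ℝ) (A : Finset (Fin n)) :
    margEnt μ A = -∑ x : Fin n → Bool, μ x * Real.log (marg μ A (res A x)) := by
  unfold margEnt
  congr 1
  rw [sum_res μ A (fun z => Real.log (marg μ A z))]

lemma marg_nonneg (hμ0 : ∀ x, 0 ≤ μ x) (A : Finset (Fin n)) (y : Fin n → Bool) :
    0 ≤ marg μ A y := by
  unfold marg
  refine Finset.sum_nonneg fun x _ => ?_
  split
  · exact hμ0 x
  · exact le_rfl

lemma le_marg (hμ0 : ∀ x, 0 ≤ μ x) (A : Finset (Fin n)) (x : Fin n → Bool) :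
    μ x ≤ marg μ A (res A x) := by
  unfold marg
  have hx : (if ∀ i ∈ A, x i = res A x i then μ x else 0) = μ x := by
    rw [if_pos]
    intro i hi
    simp [res, hi]
  rw [← hx]
  exact Finset.single_le_sum (f := fun x' => if ∀ i ∈ A, x' i = res A x i then μ x' else 0)
      (fun x' _ => by split
                      · exact hμ0 x'
                      · exact le_rfl) (Finset.mem_univ x)

lemma marg_anti (hμ0 : ∀ x, 0 ≤ μ x) {A B : Finset (Fin n)} (h : A ⊆ B) (x : Fin n → Bool) :
    marg μ B (res B x) ≤ marg μ A (res A x) := by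
  unfold marg
  refine Finset.sum_le_sum fun x' _ => ?_
  by_cases hB : ∀ i ∈ B, x' i = res B x i
  · rw [if_pos hB, if_pos]
    intro i hi
    have := hB i (h hi)
    simpa [res, hi, h hi] using this
  · rw [if_neg hB]
    split
    · exact hμ0 x'
    · exact le_rfl
end CorrRound
namespace CorrRound
variable {n : ℕ} {μ : (Fin n → Bool) → ℝ}

lemma fiber_indicator {A B : Finset (Fin n)} (x y : Fin n → Bool) (hy : y ∈ reps A) (c : ℝ) :
    ∑ z ∈ (reps (A ∪ B)).filter (fun z => res A z = y), (if res B x = res B z then c else 0)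
      = if res (A ∩ B) x = res (A ∩ B) y then c else 0 := by
  by_cases h : res (A ∩ B) x = res (A ∩ B) y
  · rw [if_pos h]
    set w : Fin n → Bool := fun i => if i ∈ A then y i else res B x i with hw
    have hwB : res B w = res B x := by
      funext i
      by_cases hiB : i ∈ B
      · by_cases hiA : i ∈ A
        · have hI : i ∈ A ∩ B := Finset.mem_inter.2 ⟨hiA, hiB⟩
          have h1 : res (A ∩ B) x i = res (A ∩ B) y i := by rw [h]
          simp only [res, hI, if_pos] at h1
          simp [res, hiB, hw, hiA, h1.symm]
        · simp [res, hiB, hw, hiA]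
      · simp [res, hiB]
    have hwmem : w ∈ (reps (A ∪ B)).filter (fun z => res A z = y) := by
      refine Finset.mem_filter.2 ⟨mem_reps_iff.2 fun i hi => ?_, ?_⟩
      · have hiA : i ∉ A := fun hh => hi (Finset.mem_union_left _ hh)
        have hiB : i ∉ B := fun hh => hi (Finset.mem_union_right _ hh)
        simp [hw, hiA, res, hiB]
      · funext i
        by_cases hiA : i ∈ A
        · simp [res, hiA, hw]
        · simp [res, hiA, (mem_reps_iff.1 hy i hiA).symm]
    rw [Finset.sum_eq_single_of_mem w hwmem]
    · rw [if_pos hwB.symm]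
    · intro z hz hzw
      rw [if_neg]
      intro hBz
      apply hzw
      obtain ⟨hzU, hzA⟩ := Finset.mem_filter.1 hz
      funext i
      by_cases hiA : i ∈ A
      · have : res A z i = y i := by rw [hzA]
        simp only [res, hiA, if_pos] at this
        simp [hw, hiA, this]
      · by_cases hiB : i ∈ B
        · have : res B x i = res B z i := by rw [hBz]
          simp only [res, hiB, if_pos] at this
          simp [hw, hiA, res, hiB, this.symm]
        · have : i ∉ A ∪ B := by simp [hiA, hiB]
          simp [hw, hiA, res, hiB, mem_reps_iff.1 hzU i this]
  · rw [if_neg h]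
    refine Finset.sum_eq_zero fun z hz => ?_
    rw [if_neg]
    intro hBz
    apply h
    obtain ⟨hzU, hzA⟩ := Finset.mem_filter.1 hz
    calc res (A ∩ B) x = res (A ∩ B) (res B x) := (res_res Finset.inter_subset_right x).symm
      _ = res (A ∩ B) (res B z) := by rw [hBz]
      _ = res (A ∩ B) z := res_res Finset.inter_subset_right z
      _ = res (A ∩ B) (res A z) := (res_res Finset.inter_subset_left z).symm
      _ = res (A ∩ B) y := by rw [hzA]

lemma sum_fiber_margB (μ : (Fin n → Bool) → ℝ) {A B : Finset (Fin n)} {y : Fin n → Bool}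
    (hy : y ∈ reps A) :
    ∑ z ∈ (reps (A ∪ B)).filter (fun z => res A z = y), marg μ B (res B z)
      = marg μ (A ∩ B) (res (A ∩ B) y) := by
  have h1 : ∀ z ∈ (reps (A ∪ B)).filter (fun z => res A z = y),
      marg μ B (res B z) = ∑ x : Fin n → Bool, if res B x = res B z then μ x else 0 := by
    intro z _
    exact marg_eq (res_mem_reps B z) μ
  rw [Finset.sum_congr rfl h1, Finset.sum_comm]
  rw [marg_eq (res_mem_reps (A ∩ B) y) μ]
  refine Finset.sum_congr rfl fun x _ => ?_
  rw [fiber_indicator x y hy (μ x)]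
end CorrRound
namespace CorrRound
variable {n : ℕ} {μ : (Fin n → Bool) → ℝ}

lemma sum_ratio_le_one (hμ : IsDist μ) (A B : Finset (Fin n)) :
    ∑ x : Fin n → Bool, μ x *
        (marg μ A (res A x) * marg μ B (res B x)
          / (marg μ (A ∪ B) (res (A ∪ B) x) * marg μ (A ∩ B) (res (A ∩ B) x))) ≤ 1 := by
  obtain ⟨hμ0, hμ1⟩ := hμ
  set g : (Fin n → Bool) → ℝ := fun z =>
    marg μ A (res A z) * marg μ B (res B z)
      / (marg μ (A ∪ B) (res (A ∪ B) z) * marg μ (A ∩ B) (res (A ∩ B) z)) with hg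
  have hgU : ∀ x, g (res (A ∪ B) x) = g x := by
    intro x
    simp only [hg]
    rw [res_res Finset.subset_union_left, res_res Finset.subset_union_right,
      res_res (le_refl (A ∪ B)), res_res (Finset.inter_subset_union) x]
  have h1 : ∑ x : Fin n → Bool, μ x * g x
      = ∑ z ∈ reps (A ∪ B), marg μ (A ∪ B) z * g z := by
    rw [← sum_res μ (A ∪ B) g]
    exact Finset.sum_congr rfl fun x _ => by rw [hgU]
  show ∑ x : Fin n → Bool, μ x * g x ≤ 1
  rw [h1]
  set s : (Fin n → Bool) → ℝ := fun z =>
    if marg μ (A ∩ B) (res (A ∩ B) z) = 0 then 0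
    else marg μ A (res A z) * marg μ B (res B z) / marg μ (A ∩ B) (res (A ∩ B) z) with hs
  have hterm : ∀ z ∈ reps (A ∪ B), marg μ (A ∪ B) z * g z ≤ s z := by
    intro z hz
    have hzz : res (A ∪ B) z = z := res_eq_self hz
    by_cases hu : marg μ (A ∪ B) z = 0
    · rw [hu, zero_mul, hs]
      dsimp only
      split
      · exact le_rfl
      · have h0 : 0 ≤ marg μ A (res A z) := marg_nonneg hμ0 _ _
        have h2 : 0 ≤ marg μ B (res B z) := marg_nonneg hμ0 _ _
        have h3 : 0 ≤ marg μ (A ∩ B) (res (A ∩ B) z) := marg_nonneg hμ0 _ _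
        positivity
    · have hupos : 0 < marg μ (A ∪ B) z := lt_of_le_of_ne (marg_nonneg hμ0 _ _) (Ne.symm hu)
      have hile : marg μ (A ∪ B) (res (A ∪ B) z) ≤ marg μ (A ∩ B) (res (A ∩ B) z) :=
        marg_anti hμ0 (Finset.inter_subset_union) z
      rw [hzz] at hile
      have hipos : 0 < marg μ (A ∩ B) (res (A ∩ B) z) := lt_of_lt_of_le hupos hile
      have : marg μ (A ∪ B) z * g z
          = marg μ A (res A z) * marg μ B (res B z) / marg μ (A ∩ B) (res (A ∩ B) z) := by
        rw [hg]
        dsimp only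
        rw [hzz]
        field_simp
      rw [this, hs]
      dsimp only
      rw [if_neg (ne_of_gt hipos)]
  refine le_trans (Finset.sum_le_sum hterm) ?_
  -- group by fibers of res A
  have hmaps : ∀ z ∈ reps (A ∪ B), res A z ∈ reps A := fun z _ => res_mem_reps A z
  rw [← Finset.sum_fiberwise_of_maps_to hmaps s]
  have hfib : ∀ y ∈ reps A,
      ∑ z ∈ (reps (A ∪ B)).filter (fun z => res A z = y), s z ≤ marg μ A y := by
    intro y hy
    have hcongr : ∀ z ∈ (reps (A ∪ B)).filter (fun z => res A z = y),
        s z = (if marg μ (A ∩ B) (res (A ∩ B) y) = 0 then 0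
          else marg μ A y / marg μ (A ∩ B) (res (A ∩ B) y) * marg μ B (res B z)) := by
      intro z hz
      have hzA : res A z = y := (Finset.mem_filter.1 hz).2
      have hzI : res (A ∩ B) z = res (A ∩ B) y := by
        rw [← hzA, res_res Finset.inter_subset_left]
      rw [hs]
      dsimp only
      rw [hzI, hzA]
      split
      · rfl
      · rw [div_mul_eq_mul_div, mul_comm]
    rw [Finset.sum_congr rfl hcongr]
    by_cases hi0 : marg μ (A ∩ B) (res (A ∩ B) y) = 0
    · simp only [hi0, if_pos, if_true]
      simp [Finset.sum_const_zero]
      exact marg_nonneg hμ0 _ _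
    · simp only [if_neg hi0]
      rw [← Finset.mul_sum, sum_fiber_margB μ hy]
      rw [div_mul_eq_mul_div, mul_div_assoc, div_self hi0, mul_one]
  refine le_trans (Finset.sum_le_sum hfib) ?_
  rw [sum_marg, hμ1]

lemma margEnt_submod (hμ : IsDist μ) (A B : Finset (Fin n)) :
    margEnt μ (A ∪ B) + margEnt μ (A ∩ B) ≤ margEnt μ A + margEnt μ B := by
  obtain ⟨hμ0, hμ1⟩ := hμ
  rw [margEnt_eq μ A, margEnt_eq μ B, margEnt_eq μ (A ∪ B), margEnt_eq μ (A ∩ B)]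
  rw [← neg_add, ← neg_add, neg_le_neg_iff]
  rw [← Finset.sum_add_distrib, ← Finset.sum_add_distrib]
  have key : ∀ x : Fin n → Bool,
      μ x * Real.log (marg μ A (res A x)) + μ x * Real.log (marg μ B (res B x))
        ≤ μ x * Real.log (marg μ (A ∪ B) (res (A ∪ B) x))
          + μ x * Real.log (marg μ (A ∩ B) (res (A ∩ B) x))
          - μ x
          + μ x * (marg μ A (res A x) * marg μ B (res B x)
            / (marg μ (A ∪ B) (res (A ∪ B) x) * marg μ (A ∩ B) (res (A ∩ B) x))) := by
    intro x
    by_cases hx : μ x = 0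
    · simp [hx]
    · have hxpos : 0 < μ x := lt_of_le_of_ne (hμ0 x) (Ne.symm hx)
      set pU := marg μ (A ∪ B) (res (A ∪ B) x) with hpU
      set pI := marg μ (A ∩ B) (res (A ∩ B) x) with hpI
      set pA := marg μ A (res A x) with hpA
      set pB := marg μ B (res B x) with hpB
      have hU : 0 < pU := lt_of_lt_of_le hxpos (le_marg hμ0 _ x)
      have hI : 0 < pI := lt_of_lt_of_le hU (marg_anti hμ0 Finset.inter_subset_union x)
      have hA : 0 < pA := lt_of_lt_of_le hU (marg_anti hμ0 Finset.subset_union_left x)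
      have hB : 0 < pB := lt_of_lt_of_le hU (marg_anti hμ0 Finset.subset_union_right x)
      have hlog : Real.log (pA * pB / (pU * pI)) ≤ pA * pB / (pU * pI) - 1 :=
        Real.log_le_sub_one_of_pos (by positivity)
      have hsplit : Real.log (pA * pB / (pU * pI))
          = Real.log pA + Real.log pB - Real.log pU - Real.log pI := by
        rw [Real.log_div (by positivity) (by positivity), Real.log_mul (ne_of_gt hA)
          (ne_of_gt hB), Real.log_mul (ne_of_gt hU) (ne_of_gt hI)]
        ring
      rw [hsplit] at hlog
      nlinarith [mul_le_mul_of_nonneg_left hlog (le_of_lt hxpos)]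
  refine le_trans (Finset.sum_le_sum fun x _ => key x) ?_
  rw [Finset.sum_add_distrib]
  have h2 : ∑ x : Fin n → Bool,
      (μ x * Real.log (marg μ (A ∪ B) (res (A ∪ B) x))
        + μ x * Real.log (marg μ (A ∩ B) (res (A ∩ B) x)) - μ x)
      = (∑ x : Fin n → Bool, (μ x * Real.log (marg μ (A ∪ B) (res (A ∪ B) x))
          + μ x * Real.log (marg μ (A ∩ B) (res (A ∩ B) x)))) - 1 := by
    rw [Finset.sum_sub_distrib, hμ1]
  rw [h2]
  have h3 := sum_ratio_le_one ⟨hμ0, hμ1⟩ A B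
  linarith
end CorrRound
namespace CorrRound
variable {n : ℕ} {μ : (Fin n → Bool) → ℝ}

lemma margEnt_empty (hμ : IsDist μ) : margEnt μ (∅ : Finset (Fin n)) = 0 := by
  rw [margEnt_eq]
  have : ∀ x : Fin n → Bool, marg μ ∅ (res ∅ x) = 1 := by
    intro x
    unfold marg
    simp [hμ.2]
  simp [this]

lemma margEnt_mono (hμ : IsDist μ) {A B : Finset (Fin n)} (h : A ⊆ B) :
    margEnt μ A ≤ margEnt μ B := by
  rw [margEnt_eq, margEnt_eq, neg_le_neg_iff]
  refine Finset.sum_le_sum fun x _ => ?_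
  by_cases hx : μ x = 0
  · simp [hx]
  · have hxpos : 0 < μ x := lt_of_le_of_ne (hμ.1 x) (Ne.symm hx)
    have hB : 0 < marg μ B (res B x) := lt_of_lt_of_le hxpos (le_marg hμ.1 _ x)
    exact mul_le_mul_of_nonneg_left
      (Real.log_le_log hB (marg_anti hμ.1 h x)) (le_of_lt hxpos)

lemma margEnt_nonneg (hμ : IsDist μ) (A : Finset (Fin n)) : 0 ≤ margEnt μ A := by
  rw [← margEnt_empty hμ]
  exact margEnt_mono hμ (Finset.empty_subset A)

lemma margEnt_le_log_card (hμ : IsDist μ) (A : Finset (Fin n)) :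
    margEnt μ A ≤ Real.log ((reps A).card) := by
  set N : ℝ := ((reps A).card : ℝ) with hN
  have hNpos : 0 < N := by
    have : res A (fun _ => false) ∈ reps A := res_mem_reps A _
    have h1 : 0 < (reps A).card := Finset.card_pos.2 ⟨_, this⟩
    rw [hN]
    exact_mod_cast h1
  have key : ∀ y ∈ reps A,
      -(marg μ A y * Real.log (marg μ A y))
        ≤ marg μ A y * Real.log N - marg μ A y + 1 / N := by
    intro y _
    set q := marg μ A y with hq
    have hq0 : 0 ≤ q := marg_nonneg hμ.1 A y
    rcases eq_or_lt_of_le hq0 with h0 | hpos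
    · rw [← h0]
      simp
      positivity
    · have hlog : Real.log (1 / (q * N)) ≤ 1 / (q * N) - 1 :=
        Real.log_le_sub_one_of_pos (by positivity)
      rw [Real.log_div one_ne_zero (by positivity), Real.log_one,
        Real.log_mul (ne_of_gt hpos) (ne_of_gt hNpos)] at hlog
      have h2 : q - 1 / N ≤ q * (Real.log q + Real.log N) := by
        have := mul_le_mul_of_nonneg_left hlog (le_of_lt hpos)
        have hqN : q * (1 / (q * N)) = 1 / N := by field_simp
        nlinarith
      nlinarith
  calc margEnt μ A = ∑ y ∈ reps A, -(marg μ A y * Real.log (marg μ A y)) := by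
        unfold margEnt
        rw [Finset.sum_neg_distrib]
    _ ≤ ∑ y ∈ reps A, (marg μ A y * Real.log N - marg μ A y + 1 / N) :=
        Finset.sum_le_sum key
    _ = Real.log N := by
        rw [Finset.sum_add_distrib, Finset.sum_sub_distrib, ← Finset.sum_mul,
          sum_marg, hμ.2, one_mul, Finset.sum_const, nsmul_eq_mul]
        rw [mul_one_div, ← hN, div_self (ne_of_gt hNpos)]
        ring

lemma card_reps_singleton_le (i : Fin n) : (reps ({i} : Finset (Fin n))).card ≤ 2 := by
  have hsub : reps ({i} : Finset (Fin n))
      ⊆ insert (res {i} (fun _ => true)) {res {i} (fun _ => false)} := by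
    intro y hy
    have : y = res {i} (fun _ => y i) := by
      funext j
      by_cases hj : j ∈ ({i} : Finset (Fin n))
      · have : j = i := Finset.mem_singleton.1 hj
        simp [res, hj, this]
      · simp [res, hj, mem_reps_iff.1 hy j hj]
    cases hyi : y i
    · rw [this, hyi]
      simp
    · rw [this, hyi]
      simp
  calc (reps ({i} : Finset (Fin n))).card ≤ _ := Finset.card_le_card hsub
    _ ≤ 2 := le_trans (Finset.card_insert_le _ _) (by simp)

lemma margEnt_singleton_le (hμ : IsDist μ) (i : Fin n) :
    margEnt μ {i} ≤ Real.log 2 := by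
  refine le_trans (margEnt_le_log_card hμ {i}) ?_
  have h1 : 0 < (reps ({i} : Finset (Fin n))).card := by
    exact Finset.card_pos.2 ⟨_, res_mem_reps {i} (fun _ => false)⟩
  have := card_reps_singleton_le i
  have h2 : ((reps ({i} : Finset (Fin n))).card : ℝ) ≤ 2 := by exact_mod_cast this
  exact Real.log_le_log (by exact_mod_cast h1) h2
end CorrRound
namespace CorrRound
variable {n : ℕ} {μ : (Fin n → Bool) → ℝ}

lemma submod_insert (hμ : IsDist μ) {S : Finset (Fin n)} {i j : Fin n} (hij : i ≠ j)
    (hiS : i ∉ S) (hjS : j ∉ S) :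
    margEnt μ (insert i (insert j S)) + margEnt μ S
      ≤ margEnt μ (insert i S) + margEnt μ (insert j S) := by
  have hU : insert i S ∪ insert j S = insert i (insert j S) := by
    ext b
    simp only [Finset.mem_union, Finset.mem_insert]
    tauto
  have hI : insert i S ∩ insert j S = S := by
    ext b
    simp only [Finset.mem_inter, Finset.mem_insert]
    constructor
    · rintro ⟨rfl | hb1, hb2 | hb2⟩
      · exact absurd hb2 hij
      · exact absurd hb2 hiS
      · exact hb1
      · exact hb1
    · intro hb
      exact ⟨Or.inr hb, Or.inr hb⟩
  have := margEnt_submod hμ (insert i S) (insert j S)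
  rw [hU, hI] at this
  linarith

lemma han (hμ : IsDist μ) (S : Finset (Fin n)) (F : Finset (Fin n)) (hF : F.Nonempty)
    (hd : Disjoint F S) :
    margEnt μ S + (F.card : ℝ) * margEnt μ (F ∪ S)
      ≤ (∑ i ∈ F, margEnt μ (F.erase i ∪ S)) + margEnt μ (F ∪ S) := by
  induction hF using Finset.Nonempty.cons_induction with
  | singleton a =>
    rw [Finset.sum_singleton, Finset.erase_singleton, Finset.empty_union, Finset.card_singleton]
    simp
  | cons a F' ha hF' ih =>
    rw [Finset.cons_eq_insert] at hd ⊢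
    have hd' : Disjoint F' S := by
      rw [Finset.disjoint_insert_left] at hd
      exact hd.2
    have haS : a ∉ S := by
      rw [Finset.disjoint_insert_left] at hd
      exact hd.1
    have ihh := ih hd'
    have key : ∀ i ∈ F', margEnt μ (insert a F' ∪ S) + margEnt μ (F'.erase i ∪ S)
        ≤ margEnt μ (F' ∪ S) + margEnt μ ((insert a F').erase i ∪ S) := by
      intro i hi
      have hai : a ≠ i := fun h => ha (h ▸ hi)
      have hU : (F' ∪ S) ∪ ((insert a F').erase i ∪ S) = insert a F' ∪ S := by
        ext b
        simp only [Finset.mem_union, Finset.mem_erase, Finset.mem_insert]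
        constructor
        · rintro ((hb | hb) | ((⟨hbi, hb | hb⟩) | hb)) <;> tauto
        · rintro ((rfl | hb) | hb)
          · exact Or.inr (Or.inl ⟨hai, Or.inl rfl⟩)
          · exact Or.inl (Or.inl hb)
          · exact Or.inl (Or.inr hb)
      have hI : (F' ∪ S) ∩ ((insert a F').erase i ∪ S) = F'.erase i ∪ S := by
        ext b
        simp only [Finset.mem_inter, Finset.mem_union, Finset.mem_erase, Finset.mem_insert]
        constructor
        · rintro ⟨h1, (⟨hbi, rfl | hb⟩) | hb⟩
          · rcases h1 with h1 | h1
            · exact absurd h1 ha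
            · exact absurd h1 haS
          · exact Or.inl ⟨hbi, hb⟩
          · exact Or.inr hb
        · rintro (⟨hbi, hb⟩ | hb)
          · exact ⟨Or.inl hb, Or.inl ⟨hbi, Or.inr hb⟩⟩
          · exact ⟨Or.inr hb, Or.inr hb⟩
      have := margEnt_submod hμ (F' ∪ S) ((insert a F').erase i ∪ S)
      rw [hU, hI] at this
      linarith
    have hsum : ∑ i ∈ F', (margEnt μ (insert a F' ∪ S) + margEnt μ (F'.erase i ∪ S))
        ≤ ∑ i ∈ F', (margEnt μ (F' ∪ S) + margEnt μ ((insert a F').erase i ∪ S)) :=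
      Finset.sum_le_sum key
    rw [Finset.sum_add_distrib, Finset.sum_add_distrib, Finset.sum_const, Finset.sum_const,
      nsmul_eq_mul, nsmul_eq_mul] at hsum
    rw [Finset.sum_insert ha, Finset.card_insert_of_notMem ha, Finset.erase_insert ha]
    push_cast
    linarith

lemma condTC_le (hμ : IsDist μ) {F S : Finset (Fin n)} (hF : F.Nonempty)
    (hd : Disjoint F S) :
    condTC μ F S ≤ ∑ i ∈ F, (margEnt μ (insert i S) - margEnt μ S
      - (margEnt μ (F ∪ S) - margEnt μ (F.erase i ∪ S))) := by
  have hhan := han hμ S F hF hd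
  unfold condTC condEnt
  have hsing : ∀ i ∈ F, margEnt μ ({i} ∪ S) - margEnt μ S
      = margEnt μ (insert i S) - margEnt μ S := by
    intro i _
    have h1 : ({i} : Finset (Fin n)) ∪ S = insert i S := by
      ext b
      simp
    rw [h1]
  rw [Finset.sum_congr rfl hsing]
  have hexp : ∑ i ∈ F, (margEnt μ (insert i S) - margEnt μ S
      - (margEnt μ (F ∪ S) - margEnt μ (F.erase i ∪ S)))
      = (∑ i ∈ F, (margEnt μ (insert i S) - margEnt μ S))
        - (F.card : ℝ) * margEnt μ (F ∪ S) + ∑ i ∈ F, margEnt μ (F.erase i ∪ S) := by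
    rw [Finset.sum_sub_distrib, Finset.sum_sub_distrib, Finset.sum_sub_distrib,
      Finset.sum_const, Finset.sum_const, nsmul_eq_mul, nsmul_eq_mul]
    ring
  rw [hexp]
  linarith

lemma condEnt_single_anti (hμ : IsDist μ) {S : Finset (Fin n)} {i j : Fin n} (hij : i ≠ j)
    (hiS : i ∉ S) (hjS : j ∉ S) :
    margEnt μ (insert i (insert j S)) - margEnt μ (insert j S)
      ≤ margEnt μ (insert i S) - margEnt μ S := by
  have := submod_insert hμ hij hiS hjS
  linarith
end CorrRound
namespace CorrRound
variable {n : ℕ} {μ : (Fin n → Bool) → ℝ}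

lemma sum_union_powersetCard {α : Type*} [DecidableEq α] (U : Finset α) (a b : ℕ)
    (g : Finset α → ℝ) :
    ∑ S ∈ U.powersetCard a, ∑ F ∈ (U \ S).powersetCard b, g (F ∪ S)
      = ((a + b).choose a : ℝ) * ∑ T ∈ U.powersetCard (a + b), g T := by
  have hR : ∀ T ∈ U.powersetCard (a+b), ((a + b).choose a : ℝ) * g T
      = ∑ _S ∈ T.powersetCard a, g T := by
    intro T hT
    rw [Finset.sum_const, nsmul_eq_mul, Finset.card_powersetCard,
      (Finset.mem_powersetCard.1 hT).2]
  rw [Finset.mul_sum, Finset.sum_congr rfl hR, Finset.sum_sigma', Finset.sum_sigma']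
  refine Finset.sum_nbij' (fun p => ⟨p.2 ∪ p.1, p.1⟩) (fun q => ⟨q.2, q.1 \ q.2⟩)
    ?_ ?_ ?_ ?_ ?_
  · rintro ⟨S, F⟩ hp
    rw [Finset.mem_sigma] at hp
    obtain ⟨hS, hF⟩ := hp
    rw [Finset.mem_powersetCard] at hS hF
    have hFS : Disjoint F S := Finset.disjoint_of_subset_left hF.1 (Finset.sdiff_disjoint)
    rw [Finset.mem_sigma, Finset.mem_powersetCard]
    refine ⟨⟨Finset.union_subset (hF.1.trans (Finset.sdiff_subset)) hS.1, ?_⟩, ?_⟩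
    · rw [Finset.card_union_of_disjoint hFS, hF.2, hS.2, Nat.add_comm]
    · rw [Finset.mem_powersetCard]
      exact ⟨Finset.subset_union_right, hS.2⟩
  · rintro ⟨T, S⟩ hq
    rw [Finset.mem_sigma] at hq
    obtain ⟨hT, hS⟩ := hq
    rw [Finset.mem_powersetCard] at hT hS
    rw [Finset.mem_sigma, Finset.mem_powersetCard]
    refine ⟨⟨hS.1.trans hT.1, hS.2⟩, ?_⟩
    rw [Finset.mem_powersetCard]
    refine ⟨Finset.sdiff_subset_sdiff hT.1 (le_refl S), ?_⟩
    rw [Finset.card_sdiff_of_subset hS.1, hT.2, hS.2, Nat.add_sub_cancel_left]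
  · rintro ⟨S, F⟩ hp
    rw [Finset.mem_sigma] at hp
    obtain ⟨hS, hF⟩ := hp
    rw [Finset.mem_powersetCard] at hF
    have hFS : Disjoint F S := Finset.disjoint_of_subset_left hF.1 (Finset.sdiff_disjoint)
    simp only
    rw [Finset.union_sdiff_cancel_right hFS]
  · rintro ⟨T, S⟩ hq
    rw [Finset.mem_sigma] at hq
    obtain ⟨hT, hS⟩ := hq
    rw [Finset.mem_powersetCard] at hS
    simp only
    rw [Finset.sdiff_union_of_subset hS.1]
  · rintro ⟨S, F⟩ _
    rfl

lemma sum_erase_filter {α : Type*} [DecidableEq α] (W : Finset α) (i : α) (hi : i ∈ W)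
    (k : ℕ) (hk : 1 ≤ k) (v : Finset α → ℝ) :
    ∑ F ∈ (W.powersetCard k).filter (fun F => i ∈ F), v (F.erase i)
      = ∑ F' ∈ (W.erase i).powersetCard (k - 1), v F' := by
  refine Finset.sum_nbij' (fun F => F.erase i) (fun F' => insert i F') ?_ ?_ ?_ ?_ ?_
  · intro F hF
    rw [Finset.mem_filter, Finset.mem_powersetCard] at hF
    rw [Finset.mem_powersetCard]
    constructor
    · exact Finset.erase_subset_erase i hF.1.1
    · rw [Finset.card_erase_of_mem hF.2, hF.1.2]
  · intro F' hF'
    rw [Finset.mem_powersetCard] at hF'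
    have hiF' : i ∉ F' := fun h => (Finset.mem_erase.1 (hF'.1 h)).1 rfl
    rw [Finset.mem_filter, Finset.mem_powersetCard]
    refine ⟨⟨?_, ?_⟩, Finset.mem_insert_self i F'⟩
    · rw [Finset.insert_subset_iff]
      exact ⟨hi, hF'.1.trans (Finset.erase_subset i W)⟩
    · rw [Finset.card_insert_of_notMem hiF', hF'.2, Nat.sub_add_cancel hk]
  · intro F hF
    rw [Finset.mem_filter] at hF
    exact Finset.insert_erase hF.2
  · intro F' hF'
    rw [Finset.mem_powersetCard] at hF'
    have hiF' : i ∉ F' := fun h => (Finset.mem_erase.1 (hF'.1 h)).1 rfl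
    exact Finset.erase_insert hiF'
  · intro F _
    rfl
end CorrRound
namespace CorrRound
variable {n : ℕ} {μ : (Fin n → Bool) → ℝ}

lemma swap_F_i {α : Type*} [DecidableEq α] (W : Finset α) (k : ℕ) (v : α → Finset α → ℝ) :
    ∑ F ∈ W.powersetCard k, ∑ i ∈ F, v i F
      = ∑ i ∈ W, ∑ F ∈ (W.powersetCard k).filter (fun F => i ∈ F), v i F := by
  have h1 : ∀ F ∈ W.powersetCard k, ∑ i ∈ F, v i F
      = ∑ i ∈ W, if i ∈ F then v i F else 0 := by
    intro F hF
    rw [Finset.sum_ite_mem]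
    congr 1
    exact (Finset.inter_eq_right.2 (Finset.mem_powersetCard.1 hF).1).symm
  rw [Finset.sum_congr rfl h1, Finset.sum_comm]
  exact Finset.sum_congr rfl fun i _ => (Finset.sum_filter _ _).symm

lemma swap_S_i (t : ℕ) (w : Fin n → Finset (Fin n) → ℝ) :
    ∑ S ∈ (Finset.univ : Finset (Fin n)).powersetCard t,
        ∑ i ∈ (Finset.univ : Finset (Fin n)) \ S, w i S
      = ∑ i : Fin n, ∑ S ∈ ((Finset.univ : Finset (Fin n)).erase i).powersetCard t, w i S := by
  have h1 : ∀ S ∈ (Finset.univ : Finset (Fin n)).powersetCard t,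
      ∑ i ∈ (Finset.univ : Finset (Fin n)) \ S, w i S
        = ∑ i : Fin n, if i ∉ S then w i S else 0 := by
    intro S _
    rw [Finset.sum_ite, Finset.sum_const_zero, add_zero]
    apply Finset.sum_congr _ fun i _ => rfl
    ext i
    simp [Finset.mem_sdiff, Finset.mem_filter]
  rw [Finset.sum_congr rfl h1, Finset.sum_comm]
  refine Finset.sum_congr rfl fun i _ => ?_
  rw [Finset.sum_ite, Finset.sum_const_zero, add_zero]
  apply Finset.sum_congr _ fun S _ => rfl
  ext S
  simp only [Finset.mem_filter, Finset.mem_powersetCard, Finset.subset_erase]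
  constructor
  · rintro ⟨⟨_, hc⟩, hiS⟩
    exact ⟨⟨Finset.subset_univ S, hiS⟩, hc⟩
  · rintro ⟨⟨_, hiS⟩, hc⟩
    exact ⟨⟨Finset.subset_univ S, hc⟩, hiS⟩

/-- The unnormalized average `∑_i ∑_{|S|=t, i∉S} H(X_i|X_S)`. -/
def Phi (μ : (Fin n → Bool) → ℝ) (t : ℕ) : ℝ :=
  ∑ i : Fin n, ∑ S ∈ ((Finset.univ : Finset (Fin n)).erase i).powersetCard t,
    (margEnt μ (insert i S) - margEnt μ S)

lemma Phi_nonneg (hμ : IsDist μ) (t : ℕ) : 0 ≤ Phi μ t := by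
  refine Finset.sum_nonneg fun i _ => Finset.sum_nonneg fun S _ => ?_
  have := margEnt_mono hμ (Finset.subset_insert i S)
  linarith

lemma Phi_zero_le (hμ : IsDist μ) : Phi μ 0 ≤ (n : ℝ) * Real.log 2 := by
  unfold Phi
  have h1 : ∀ i : Fin n,
      ∑ S ∈ ((Finset.univ : Finset (Fin n)).erase i).powersetCard 0,
        (margEnt μ (insert i S) - margEnt μ S) ≤ Real.log 2 := by
    intro i
    rw [Finset.powersetCard_zero, Finset.sum_singleton,
      show insert i (∅ : Finset (Fin n)) = {i} from rfl, margEnt_empty hμ, sub_zero]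
    exact margEnt_singleton_le hμ i
  calc ∑ i : Fin n, ∑ S ∈ ((Finset.univ : Finset (Fin n)).erase i).powersetCard 0,
        (margEnt μ (insert i S) - margEnt μ S)
      ≤ ∑ _i : Fin n, Real.log 2 := Finset.sum_le_sum fun i _ => h1 i
    _ = (n : ℝ) * Real.log 2 := by
        rw [Finset.sum_const, nsmul_eq_mul, Finset.card_univ, Fintype.card_fin]

lemma Phi_succ_le (hμ : IsDist μ) (t : ℕ) (ht : t + 1 ≤ n - 1) :
    ((t : ℝ) + 1) * Phi μ (t + 1) ≤ ((n - 1 - t : ℕ) : ℝ) * Phi μ t := by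
  unfold Phi
  rw [Finset.mul_sum, Finset.mul_sum]
  refine Finset.sum_le_sum fun i _ => ?_
  set U : Finset (Fin n) := (Finset.univ : Finset (Fin n)).erase i with hU
  have hcardU : U.card = n - 1 := by
    rw [hU, Finset.card_erase_of_mem (Finset.mem_univ i), Finset.card_univ, Fintype.card_fin]
  have hrcore := sum_union_powersetCard U t 1
    (fun T => margEnt μ (insert i T) - margEnt μ T)
  rw [Nat.choose_succ_self_right] at hrcore
  have h1 : ∀ S ∈ U.powersetCard t,
      ∑ F ∈ (U \ S).powersetCard 1, (margEnt μ (insert i (F ∪ S)) - margEnt μ (F ∪ S))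
        = ∑ j ∈ U \ S, (margEnt μ (insert i (insert j S)) - margEnt μ (insert j S)) := by
    intro S _
    rw [Finset.powersetCard_one, Finset.sum_map]
    refine Finset.sum_congr rfl fun j _ => ?_
    have : ({j} : Finset (Fin n)) ∪ S = insert j S := by
      ext b
      simp
    simp only [Function.Embedding.coeFn_mk, this]
  rw [Finset.sum_congr rfl h1] at hrcore
  have h2 : ∀ S ∈ U.powersetCard t,
      ∑ j ∈ U \ S, (margEnt μ (insert i (insert j S)) - margEnt μ (insert j S))
        ≤ ((n - 1 - t : ℕ) : ℝ) * (margEnt μ (insert i S) - margEnt μ S) := by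
    intro S hS
    rw [Finset.mem_powersetCard] at hS
    have hcard : (U \ S).card = n - 1 - t := by
      rw [Finset.card_sdiff_of_subset hS.1, hcardU, hS.2]
    calc ∑ j ∈ U \ S, (margEnt μ (insert i (insert j S)) - margEnt μ (insert j S))
        ≤ ∑ _j ∈ U \ S, (margEnt μ (insert i S) - margEnt μ S) := by
          refine Finset.sum_le_sum fun j hj => ?_
          have hjU : j ∈ U := (Finset.mem_sdiff.1 hj).1
          have hjS : j ∉ S := (Finset.mem_sdiff.1 hj).2
          have hij : i ≠ j := fun h => (Finset.mem_erase.1 (hU ▸ hjU)).1 h.symm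
          have hiS : i ∉ S := fun h => (Finset.mem_erase.1 (hS.1 h)).1 rfl
          exact condEnt_single_anti hμ hij hiS hjS
      _ = ((n - 1 - t : ℕ) : ℝ) * (margEnt μ (insert i S) - margEnt μ S) := by
          rw [Finset.sum_const, nsmul_eq_mul, hcard]
  calc ((t : ℝ) + 1) * ∑ S ∈ U.powersetCard (t + 1),
        (margEnt μ (insert i S) - margEnt μ S)
      = ∑ S ∈ U.powersetCard t, ∑ j ∈ U \ S,
          (margEnt μ (insert i (insert j S)) - margEnt μ (insert j S)) := by
        rw [hrcore]
        push_cast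
        ring
    _ ≤ ∑ S ∈ U.powersetCard t, ((n - 1 - t : ℕ) : ℝ)
          * (margEnt μ (insert i S) - margEnt μ S) := Finset.sum_le_sum h2
    _ = ((n - 1 - t : ℕ) : ℝ) * ∑ S ∈ U.powersetCard t,
          (margEnt μ (insert i S) - margEnt μ S) := by
        rw [Finset.mul_sum]
end CorrRound
namespace CorrRound
variable {n : ℕ} {μ : (Fin n → Bool) → ℝ}

/-- Normalized average `φ(t) = E_i E_{S} H(X_i|X_S)`. -/
def phi (μ : (Fin n → Bool) → ℝ) (t : ℕ) : ℝ :=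
  Phi μ t / ((n * (n - 1).choose t : ℕ) : ℝ)

lemma phi_nonneg (hμ : IsDist μ) (t : ℕ) : 0 ≤ phi μ t :=
  div_nonneg (Phi_nonneg hμ t) (by positivity)

lemma phi_zero_le (hμ : IsDist μ) (hn : 1 ≤ n) : phi μ 0 ≤ Real.log 2 := by
  unfold phi
  rw [Nat.choose_zero_right, Nat.mul_one]
  rw [div_le_iff₀ (by exact_mod_cast Nat.pos_of_ne_zero (by omega))]
  calc Phi μ 0 ≤ (n : ℝ) * Real.log 2 := Phi_zero_le hμ
    _ = Real.log 2 * (n : ℝ) := by ring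

lemma phi_succ_le (hμ : IsDist μ) {t : ℕ} (ht : t + 1 ≤ n - 1) :
    phi μ (t + 1) ≤ phi μ t := by
  have hn : 1 ≤ n := by omega
  have hCt : 0 < (n - 1).choose t := Nat.choose_pos (by omega)
  have hCt1 : 0 < (n - 1).choose (t + 1) := Nat.choose_pos ht
  have hP := Phi_succ_le hμ t ht
  have hch : (((n - 1).choose (t + 1) : ℝ)) * ((t : ℝ) + 1)
      = ((n - 1).choose t : ℝ) * ((n - 1 - t : ℕ) : ℝ) := by
    exact_mod_cast Nat.choose_succ_right_eq (n - 1) t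
  unfold phi
  rw [div_le_div_iff₀ (by positivity) (by positivity)]
  push_cast
  set Ct : ℝ := ((n - 1).choose t : ℝ)
  set Ct1 : ℝ := ((n - 1).choose (t + 1) : ℝ)
  set c : ℝ := ((n - 1 - t : ℕ) : ℝ)
  have hCtR : 0 < Ct := by
    show (0:ℝ) < ((n - 1).choose t : ℝ)
    exact_mod_cast hCt
  have hmul : Phi μ (t + 1) * ((n : ℝ) * Ct) * ((t : ℝ) + 1)
      ≤ Phi μ t * ((n : ℝ) * Ct1) * ((t : ℝ) + 1) := by
    have h2 : Phi μ t * ((n : ℝ) * Ct1) * ((t : ℝ) + 1)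
        = (n : ℝ) * (Ct1 * ((t : ℝ) + 1)) * Phi μ t := by ring
    rw [h2, hch]
    calc Phi μ (t + 1) * ((n : ℝ) * Ct) * ((t : ℝ) + 1)
        = ((n : ℝ) * Ct) * (((t : ℝ) + 1) * Phi μ (t + 1)) := by ring
      _ ≤ ((n : ℝ) * Ct) * (c * Phi μ t) :=
          mul_le_mul_of_nonneg_left hP (by positivity)
      _ = (n : ℝ) * (Ct * c) * Phi μ t := by ring
  exact le_of_mul_le_mul_right hmul (by positivity)

lemma phi_le_log2 (hμ : IsDist μ) (hn : 1 ≤ n) : ∀ t, t ≤ n - 1 → phi μ t ≤ Real.log 2 := by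
  intro t
  induction t with
  | zero => intro _; exact phi_zero_le hμ hn
  | succ s ih =>
    intro hs
    exact le_trans (phi_succ_le hμ hs) (ih (by omega))
end CorrRound
namespace CorrRound
variable {n : ℕ} {μ : (Fin n → Bool) → ℝ}

lemma trinomial (a b c : ℕ) :
    (a + b + c).choose (a + b) * (a + b).choose a
      = (a + b + c).choose a * (b + c).choose b := by
  have h1 : (a + b).choose a * a.factorial * b.factorial = (a + b).factorial := by
    have := Nat.choose_mul_factorial_mul_factorial (Nat.le_add_right a b)
    simpa [Nat.add_sub_cancel_left] using this
  have h2 : (a + b + c).choose (a + b) * (a + b).factorial * c.factorial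
      = (a + b + c).factorial := by
    have := Nat.choose_mul_factorial_mul_factorial (Nat.le_add_right (a + b) c)
    simpa [Nat.add_sub_cancel_left] using this
  have h3 : (b + c).choose b * b.factorial * c.factorial = (b + c).factorial := by
    have := Nat.choose_mul_factorial_mul_factorial (Nat.le_add_right b c)
    simpa [Nat.add_sub_cancel_left] using this
  have h4 : (a + b + c).choose a * a.factorial * (b + c).factorial
      = (a + b + c).factorial := by
    have h := Nat.choose_mul_factorial_mul_factorial
      (show a ≤ a + (b + c) from Nat.le_add_right a (b + c))
    rw [Nat.add_sub_cancel_left] at h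
    rw [← Nat.add_assoc] at h
    exact h
  have key : ((a + b + c).choose (a + b) * (a + b).choose a)
        * (a.factorial * b.factorial * c.factorial)
      = ((a + b + c).choose a * (b + c).choose b)
        * (a.factorial * b.factorial * c.factorial) := by
    calc ((a + b + c).choose (a + b) * (a + b).choose a)
          * (a.factorial * b.factorial * c.factorial)
        = (a + b + c).choose (a + b)
            * ((a + b).choose a * a.factorial * b.factorial) * c.factorial := by ring
      _ = (a + b + c).choose (a + b) * (a + b).factorial * c.factorial := by rw [h1]
      _ = (a + b + c).factorial := h2
      _ = (a + b + c).choose a * a.factorial * (b + c).factorial := h4.symm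
      _ = (a + b + c).choose a * a.factorial
            * ((b + c).choose b * b.factorial * c.factorial) := by rw [h3]
      _ = ((a + b + c).choose a * (b + c).choose b)
            * (a.factorial * b.factorial * c.factorial) := by ring
  exact Nat.eq_of_mul_eq_mul_right (by positivity) key

lemma id_one (t d m : ℕ) :
    (d + m + 1).choose d * ((t + d + m + 2) * (t + d + m + 1).choose t)
      = (d + 1) * ((d + m + 2).choose (d + 1) * (t + d + m + 2).choose t) := by
  have e1 : (d + m + 2) * (d + m + 1).choose d = (d + m + 2).choose (d + 1) * (d + 1) := by
    exact_mod_cast Nat.add_one_mul_choose_eq (d + m + 1) d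
  have e2 : (t + d + m + 1).choose t * (t + d + m + 2)
      = (t + d + m + 2).choose t * (d + m + 2) := by
    have := Nat.choose_mul_succ_eq (t + d + m + 1) t
    rw [show t + d + m + 1 + 1 = t + d + m + 2 from rfl] at this
    rw [this]
    congr 1
    omega
  calc (d + m + 1).choose d * ((t + d + m + 2) * (t + d + m + 1).choose t)
      = (d + m + 1).choose d * ((t + d + m + 1).choose t * (t + d + m + 2)) := by ring
    _ = (d + m + 1).choose d * ((t + d + m + 2).choose t * (d + m + 2)) := by rw [e2]
    _ = ((d + m + 2) * (d + m + 1).choose d) * (t + d + m + 2).choose t := by ring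
    _ = ((d + m + 2).choose (d + 1) * (d + 1)) * (t + d + m + 2).choose t := by rw [e1]
    _ = (d + 1) * ((d + m + 2).choose (d + 1) * (t + d + m + 2).choose t) := by ring

lemma id_two (t d m : ℕ) :
    (t + d).choose t * ((t + d + m + 2) * (t + d + m + 1).choose (t + d))
      = (d + 1) * ((d + m + 2).choose (d + 1) * (t + d + m + 2).choose t) := by
  have htri := trinomial t d (m + 1)
  rw [show t + d + (m + 1) = t + d + m + 1 from by omega,
    show d + (m + 1) = d + m + 1 from by omega] at htri
  calc (t + d).choose t * ((t + d + m + 2) * (t + d + m + 1).choose (t + d))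
      = ((t + d + m + 1).choose (t + d) * (t + d).choose t) * (t + d + m + 2) := by ring
    _ = ((t + d + m + 1).choose t * (d + m + 1).choose d) * (t + d + m + 2) := by rw [htri]
    _ = (d + m + 1).choose d * ((t + d + m + 2) * (t + d + m + 1).choose t) := by ring
    _ = (d + 1) * ((d + m + 2).choose (d + 1) * (t + d + m + 2).choose t) := id_one t d m
end CorrRound
namespace CorrRound
variable {n : ℕ} {μ : (Fin n → Bool) → ℝ}

lemma sum_condTC_le (hμ : IsDist μ) (k t : ℕ) (hk1 : 1 ≤ k) (htn : t + k ≤ n - 1) :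
    ∑ S ∈ Finset.powersetCard t (Finset.univ : Finset (Fin n)),
        ∑ F ∈ Finset.powersetCard k ((Finset.univ : Finset (Fin n)) \ S), condTC μ F S
      ≤ ((n - t - 1).choose (k - 1) : ℝ) * Phi μ t
        - ((t + (k - 1)).choose t : ℝ) * Phi μ (t + (k - 1)) := by
  have hn1 : 1 ≤ n := by omega
  -- Step 1: termwise bound via `condTC_le`
  have step1 : ∑ S ∈ Finset.powersetCard t (Finset.univ : Finset (Fin n)),
      ∑ F ∈ Finset.powersetCard k ((Finset.univ : Finset (Fin n)) \ S), condTC μ F S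
      ≤ ∑ S ∈ Finset.powersetCard t (Finset.univ : Finset (Fin n)),
          (∑ F ∈ Finset.powersetCard k ((Finset.univ : Finset (Fin n)) \ S),
            ∑ i ∈ F, (margEnt μ (insert i S) - margEnt μ S))
        - ∑ S ∈ Finset.powersetCard t (Finset.univ : Finset (Fin n)),
          (∑ F ∈ Finset.powersetCard k ((Finset.univ : Finset (Fin n)) \ S),
            ∑ i ∈ F, (margEnt μ (F ∪ S) - margEnt μ (F.erase i ∪ S))) := by
    rw [← Finset.sum_sub_distrib]
    refine Finset.sum_le_sum fun S hS => ?_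
    rw [← Finset.sum_sub_distrib]
    refine Finset.sum_le_sum fun F hF => ?_
    rw [Finset.mem_powersetCard] at hF
    have hFne : F.Nonempty := by
      rw [← Finset.card_pos, hF.2]
      omega
    have hdisj : Disjoint F S :=
      Finset.disjoint_of_subset_left hF.1 Finset.sdiff_disjoint
    have := condTC_le hμ hFne hdisj
    rw [Finset.sum_sub_distrib] at this
    exact this
  refine le_trans step1 ?_
  have hcardW : ∀ S ∈ Finset.powersetCard t (Finset.univ : Finset (Fin n)),
      ((Finset.univ : Finset (Fin n)) \ S).card = n - t := by
    intro S hS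
    rw [Finset.mem_powersetCard] at hS
    rw [Finset.card_sdiff_of_subset hS.1, Finset.card_univ, Fintype.card_fin, hS.2]
  -- Step 2: the first double sum equals A * Phi t
  have hT1 : ∑ S ∈ Finset.powersetCard t (Finset.univ : Finset (Fin n)),
      (∑ F ∈ Finset.powersetCard k ((Finset.univ : Finset (Fin n)) \ S),
        ∑ i ∈ F, (margEnt μ (insert i S) - margEnt μ S))
      = ((n - t - 1).choose (k - 1) : ℝ) * Phi μ t := by
    have hS1 : ∀ S ∈ Finset.powersetCard t (Finset.univ : Finset (Fin n)),
        ∑ F ∈ Finset.powersetCard k ((Finset.univ : Finset (Fin n)) \ S),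
          ∑ i ∈ F, (margEnt μ (insert i S) - margEnt μ S)
        = ∑ i ∈ (Finset.univ : Finset (Fin n)) \ S,
            ((n - t - 1).choose (k - 1) : ℝ) * (margEnt μ (insert i S) - margEnt μ S) := by
      intro S hS
      rw [swap_F_i ((Finset.univ : Finset (Fin n)) \ S) k
        (fun i _F => margEnt μ (insert i S) - margEnt μ S)]
      refine Finset.sum_congr rfl fun i hi => ?_
      rw [sum_erase_filter ((Finset.univ : Finset (Fin n)) \ S) i hi k hk1
        (fun _F => margEnt μ (insert i S) - margEnt μ S)]
      rw [Finset.sum_const, nsmul_eq_mul, Finset.card_powersetCard,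
        Finset.card_erase_of_mem hi, hcardW S hS]
    rw [Finset.sum_congr rfl hS1, swap_S_i t
      (fun i S => ((n - t - 1).choose (k - 1) : ℝ) * (margEnt μ (insert i S) - margEnt μ S))]
    unfold Phi
    rw [Finset.mul_sum]
    exact Finset.sum_congr rfl fun i _ => by rw [Finset.mul_sum]
  -- Step 3: the second double sum equals B * Phi (t + (k-1))
  have hT2 : ∑ S ∈ Finset.powersetCard t (Finset.univ : Finset (Fin n)),
      (∑ F ∈ Finset.powersetCard k ((Finset.univ : Finset (Fin n)) \ S),
        ∑ i ∈ F, (margEnt μ (F ∪ S) - margEnt μ (F.erase i ∪ S)))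
      = ((t + (k - 1)).choose t : ℝ) * Phi μ (t + (k - 1)) := by
    have hS2 : ∀ S ∈ Finset.powersetCard t (Finset.univ : Finset (Fin n)),
        ∑ F ∈ Finset.powersetCard k ((Finset.univ : Finset (Fin n)) \ S),
          ∑ i ∈ F, (margEnt μ (F ∪ S) - margEnt μ (F.erase i ∪ S))
        = ∑ i ∈ (Finset.univ : Finset (Fin n)) \ S,
            ∑ F' ∈ (((Finset.univ : Finset (Fin n)).erase i) \ S).powersetCard (k - 1),
              (margEnt μ (insert i (F' ∪ S)) - margEnt μ (F' ∪ S)) := by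
      intro S hS
      rw [swap_F_i ((Finset.univ : Finset (Fin n)) \ S) k
        (fun i F => margEnt μ (F ∪ S) - margEnt μ (F.erase i ∪ S))]
      refine Finset.sum_congr rfl fun i hi => ?_
      have hrw : ∀ F ∈ (((Finset.univ : Finset (Fin n)) \ S).powersetCard k).filter
          (fun F => i ∈ F),
          margEnt μ (F ∪ S) - margEnt μ (F.erase i ∪ S)
            = margEnt μ (insert i (F.erase i ∪ S)) - margEnt μ (F.erase i ∪ S) := by
        intro F hF
        rw [Finset.mem_filter] at hF
        rw [← Finset.insert_union, Finset.insert_erase hF.2]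
      rw [Finset.sum_congr rfl hrw]
      rw [sum_erase_filter ((Finset.univ : Finset (Fin n)) \ S) i hi k hk1
        (fun F' => margEnt μ (insert i (F' ∪ S)) - margEnt μ (F' ∪ S))]
      have hset : ((Finset.univ : Finset (Fin n)) \ S).erase i
          = ((Finset.univ : Finset (Fin n)).erase i) \ S := by
        ext b
        simp only [Finset.mem_erase, Finset.mem_sdiff]
        tauto
      rw [hset]
    rw [Finset.sum_congr rfl hS2, swap_S_i t
      (fun i S => ∑ F' ∈ (((Finset.univ : Finset (Fin n)).erase i) \ S).powersetCard (k - 1),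
        (margEnt μ (insert i (F' ∪ S)) - margEnt μ (F' ∪ S)))]
    unfold Phi
    rw [Finset.mul_sum]
    refine Finset.sum_congr rfl fun i _ => ?_
    have := sum_union_powersetCard ((Finset.univ : Finset (Fin n)).erase i) t (k - 1)
      (fun T => margEnt μ (insert i T) - margEnt μ T)
    rw [this]
  rw [hT1, hT2]
end CorrRound
namespace CorrRound
variable {n : ℕ} {μ : (Fin n → Bool) → ℝ}

lemma main_bound (hμ : IsDist μ) (d t : ℕ) (htn : t + (d + 1) ≤ n - 1) :
    (∑ S ∈ Finset.powersetCard t (Finset.univ : Finset (Fin n)),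
        (∑ F ∈ Finset.powersetCard (d + 1) ((Finset.univ : Finset (Fin n)) \ S), condTC μ F S)
          / ((n - t).choose (d + 1) : ℝ)) / (n.choose t : ℝ)
      ≤ ((d : ℝ) + 1) * (phi μ t - phi μ (t + d)) := by
  have hd1 : d + 1 - 1 = d := by omega
  obtain ⟨m, hm⟩ : ∃ m, n = t + d + m + 2 := ⟨n - t - d - 2, by omega⟩
  have hnt : n - t = d + m + 2 := by omega
  have hnt1 : n - t - 1 = d + m + 1 := by omega
  have hn1 : n - 1 = t + d + m + 1 := by omega
  have hA : (n - t - 1).choose d * (n * (n - 1).choose t)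
      = (d + 1) * ((n - t).choose (d + 1) * n.choose t) := by
    rw [hnt1, hn1, hnt, hm]
    exact id_one t d m
  have hB : (t + d).choose t * (n * (n - 1).choose (t + d))
      = (d + 1) * ((n - t).choose (d + 1) * n.choose t) := by
    rw [hn1, hnt, hm]
    exact id_two t d m
  have hDpos : (0 : ℝ) < ((n - t).choose (d + 1) : ℝ) * (n.choose t : ℝ) := by
    have h1 : 0 < (n - t).choose (d + 1) := Nat.choose_pos (by omega)
    have h2 : 0 < n.choose t := Nat.choose_pos (by omega)
    have h1' : (0 : ℝ) < ((n - t).choose (d + 1) : ℝ) := by exact_mod_cast h1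
    have h2' : (0 : ℝ) < (n.choose t : ℝ) := by exact_mod_cast h2
    positivity
  have hPpos : (0 : ℝ) < ((n * (n - 1).choose t : ℕ) : ℝ) := by
    have : 0 < n * (n - 1).choose t :=
      Nat.mul_pos (by omega) (Nat.choose_pos (by omega))
    exact_mod_cast this
  have hQpos : (0 : ℝ) < ((n * (n - 1).choose (t + d) : ℕ) : ℝ) := by
    have : 0 < n * (n - 1).choose (t + d) :=
      Nat.mul_pos (by omega) (Nat.choose_pos (by omega))
    exact_mod_cast this
  have e1 : ((n - t - 1).choose d : ℝ)
        / (((n - t).choose (d + 1) : ℝ) * (n.choose t : ℝ))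
      = ((d : ℝ) + 1) / ((n * (n - 1).choose t : ℕ) : ℝ) := by
    rw [div_eq_div_iff (ne_of_gt hDpos) (ne_of_gt hPpos)]
    push_cast
    exact_mod_cast hA
  have e2 : ((t + d).choose t : ℝ)
        / (((n - t).choose (d + 1) : ℝ) * (n.choose t : ℝ))
      = ((d : ℝ) + 1) / ((n * (n - 1).choose (t + d) : ℕ) : ℝ) := by
    rw [div_eq_div_iff (ne_of_gt hDpos) (ne_of_gt hQpos)]
    push_cast
    exact_mod_cast hB
  have hnum := sum_condTC_le hμ (d + 1) t (by omega) htn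
  rw [hd1] at hnum
  calc (∑ S ∈ Finset.powersetCard t (Finset.univ : Finset (Fin n)),
        (∑ F ∈ Finset.powersetCard (d + 1) ((Finset.univ : Finset (Fin n)) \ S), condTC μ F S)
          / ((n - t).choose (d + 1) : ℝ)) / (n.choose t : ℝ)
      = (∑ S ∈ Finset.powersetCard t (Finset.univ : Finset (Fin n)),
          ∑ F ∈ Finset.powersetCard (d + 1) ((Finset.univ : Finset (Fin n)) \ S), condTC μ F S)
        / (((n - t).choose (d + 1) : ℝ) * (n.choose t : ℝ)) := by
        rw [← Finset.sum_div, div_div]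
    _ ≤ (((n - t - 1).choose d : ℝ) * Phi μ t
          - ((t + d).choose t : ℝ) * Phi μ (t + d))
        / (((n - t).choose (d + 1) : ℝ) * (n.choose t : ℝ)) := by
        rw [div_le_div_iff_of_pos_right hDpos]
        exact hnum
    _ = ((d : ℝ) + 1) * (phi μ t - phi μ (t + d)) := by
        unfold phi
        have f1 : ((n - t - 1).choose d : ℝ) * Phi μ t
              / (((n - t).choose (d + 1) : ℝ) * (n.choose t : ℝ))
            = ((d : ℝ) + 1) * (Phi μ t / ((n * (n - 1).choose t : ℕ) : ℝ)) := by
          calc ((n - t - 1).choose d : ℝ) * Phi μ t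
                / (((n - t).choose (d + 1) : ℝ) * (n.choose t : ℝ))
              = (((n - t - 1).choose d : ℝ)
                  / (((n - t).choose (d + 1) : ℝ) * (n.choose t : ℝ))) * Phi μ t := by
                ring
            _ = (((d : ℝ) + 1) / ((n * (n - 1).choose t : ℕ) : ℝ)) * Phi μ t := by rw [e1]
            _ = ((d : ℝ) + 1) * (Phi μ t / ((n * (n - 1).choose t : ℕ) : ℝ)) := by ring
        have f2 : ((t + d).choose t : ℝ) * Phi μ (t + d)
              / (((n - t).choose (d + 1) : ℝ) * (n.choose t : ℝ))
            = ((d : ℝ) + 1) * (Phi μ (t + d) / ((n * (n - 1).choose (t + d) : ℕ) : ℝ)) := by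
          calc ((t + d).choose t : ℝ) * Phi μ (t + d)
                / (((n - t).choose (d + 1) : ℝ) * (n.choose t : ℝ))
              = (((t + d).choose t : ℝ)
                  / (((n - t).choose (d + 1) : ℝ) * (n.choose t : ℝ))) * Phi μ (t + d) := by
                ring
            _ = (((d : ℝ) + 1) / ((n * (n - 1).choose (t + d) : ℕ) : ℝ)) * Phi μ (t + d) := by
                rw [e2]
            _ = ((d : ℝ) + 1) * (Phi μ (t + d) / ((n * (n - 1).choose (t + d) : ℕ) : ℝ)) := by
                ring
        rw [sub_div, f1, f2]
        ring

end CorrRound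

/-- Correlation rounding (restricted form): for `k, ℓ ∈ [n]` there is `t ≤ ℓ` with
`E_{S ∼ (V choose t)} E_{F ∼ ((V∖S) choose k)} [C(X_F | X_S)] ≤ k² log 2 / ℓ`. -/
theorem correlation_rounding_complement {n : ℕ} (μ : (Fin n → Bool) → ℝ) (hμ : IsDist μ)
    (k ℓ : ℕ) (hk1 : 1 ≤ k) (hkn : k ≤ n) (hl1 : 1 ≤ ℓ) (hln : ℓ ≤ n) :
    ∃ t ≤ ℓ,
      (∑ S ∈ Finset.powersetCard t (Finset.univ : Finset (Fin n)),
          (∑ F ∈ Finset.powersetCard k ((Finset.univ : Finset (Fin n)) \ S), condTC μ F S)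
            / ((n - t).choose k : ℝ)) / (n.choose t : ℝ)
        ≤ (k : ℝ) ^ 2 * Real.log 2 / (ℓ : ℝ) := by
  have hlog2 : (0 : ℝ) ≤ Real.log 2 := Real.log_nonneg one_le_two
  have hRHS : (0 : ℝ) ≤ (k : ℝ) ^ 2 * Real.log 2 / (ℓ : ℝ) := by positivity
  by_cases hcase : ℓ + k ≤ n
  · -- main case
    obtain ⟨d, rfl⟩ : ∃ d, k = d + 1 := ⟨k - 1, by omega⟩
    have hn1 : 1 ≤ n := by omega
    have htele : ∑ t ∈ Finset.range ℓ, (CorrRound.phi μ t - CorrRound.phi μ (t + d))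
        ≤ (d : ℝ) * Real.log 2 := by
      rw [Finset.sum_sub_distrib]
      have hshift : ∑ t ∈ Finset.range ℓ, CorrRound.phi μ (t + d)
          = ∑ u ∈ Finset.Ico d (d + ℓ), CorrRound.phi μ u := by
        rw [Finset.sum_Ico_eq_sum_range, show d + ℓ - d = ℓ from by omega]
        exact Finset.sum_congr rfl fun i _ => by rw [Nat.add_comm]
      rw [hshift]
      have hsubset : Finset.range ℓ
          ⊆ (Finset.range ℓ \ Finset.Ico d (d + ℓ)) ∪ Finset.Ico d (d + ℓ) := by
        intro x hx
        rw [Finset.mem_union, Finset.mem_sdiff]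
        by_cases hxm : x ∈ Finset.Ico d (d + ℓ)
        · exact Or.inr hxm
        · exact Or.inl ⟨hx, hxm⟩
      have h1 : ∑ t ∈ Finset.range ℓ, CorrRound.phi μ t
          ≤ ∑ t ∈ (Finset.range ℓ \ Finset.Ico d (d + ℓ)), CorrRound.phi μ t
            + ∑ t ∈ Finset.Ico d (d + ℓ), CorrRound.phi μ t := by
        rw [← Finset.sum_union Finset.sdiff_disjoint]
        exact Finset.sum_le_sum_of_subset_of_nonneg hsubset
          fun t _ _ => CorrRound.phi_nonneg hμ t
      have hsd : Finset.range ℓ \ Finset.Ico d (d + ℓ) = Finset.range (min d ℓ) := by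
        ext x
        simp only [Finset.mem_sdiff, Finset.mem_range, Finset.mem_Ico, not_and, not_lt]
        omega
      have h2 : ∑ t ∈ (Finset.range ℓ \ Finset.Ico d (d + ℓ)), CorrRound.phi μ t
          ≤ (d : ℝ) * Real.log 2 := by
        rw [hsd]
        calc ∑ t ∈ Finset.range (min d ℓ), CorrRound.phi μ t
            ≤ ∑ _t ∈ Finset.range (min d ℓ), Real.log 2 := by
              refine Finset.sum_le_sum fun t ht => ?_
              rw [Finset.mem_range] at ht
              exact CorrRound.phi_le_log2 hμ hn1 t (by omega)
          _ = ((min d ℓ : ℕ) : ℝ) * Real.log 2 := by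
              rw [Finset.sum_const, Finset.card_range, nsmul_eq_mul]
          _ ≤ (d : ℝ) * Real.log 2 := by
              refine mul_le_mul_of_nonneg_right ?_ hlog2
              exact_mod_cast Nat.min_le_left d ℓ
      linarith
    have hsum_const : ∑ _t ∈ Finset.range ℓ, ((d : ℝ) * Real.log 2 / (ℓ : ℝ))
        = (d : ℝ) * Real.log 2 := by
      rw [Finset.sum_const, Finset.card_range, nsmul_eq_mul]
      field_simp
    obtain ⟨t, htmem, hle⟩ := Finset.exists_le_of_sum_le
      (show (Finset.range ℓ).Nonempty from ⟨0, Finset.mem_range.2 (by omega)⟩)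
      (le_trans htele (le_of_eq hsum_const.symm))
    rw [Finset.mem_range] at htmem
    refine ⟨t, by omega, ?_⟩
    calc (∑ S ∈ Finset.powersetCard t (Finset.univ : Finset (Fin n)),
          (∑ F ∈ Finset.powersetCard (d + 1) ((Finset.univ : Finset (Fin n)) \ S), condTC μ F S)
            / ((n - t).choose (d + 1) : ℝ)) / (n.choose t : ℝ)
        ≤ ((d : ℝ) + 1) * (CorrRound.phi μ t - CorrRound.phi μ (t + d)) :=
          CorrRound.main_bound hμ d t (by omega)
      _ ≤ ((d : ℝ) + 1) * ((d : ℝ) * Real.log 2 / (ℓ : ℝ)) :=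
          mul_le_mul_of_nonneg_left hle (by positivity)
      _ ≤ ((d + 1 : ℕ) : ℝ) ^ 2 * Real.log 2 / (ℓ : ℝ) := by
          have hnn : (0 : ℝ) ≤ Real.log 2 / (ℓ : ℝ) := by positivity
          have hdk : (d : ℝ) ≤ (d : ℝ) + 1 := by linarith
          calc ((d : ℝ) + 1) * ((d : ℝ) * Real.log 2 / (ℓ : ℝ))
              = (((d : ℝ) + 1) * (d : ℝ)) * (Real.log 2 / (ℓ : ℝ)) := by ring
            _ ≤ (((d : ℝ) + 1) * ((d : ℝ) + 1)) * (Real.log 2 / (ℓ : ℝ)) := by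
                refine mul_le_mul_of_nonneg_right ?_ hnn
                refine mul_le_mul_of_nonneg_left hdk (by positivity)
            _ = ((d + 1 : ℕ) : ℝ) ^ 2 * Real.log 2 / (ℓ : ℝ) := by push_cast; ring
  · -- degenerate case: `t = n - k + 1` makes the inner sums empty
    refine ⟨n - k + 1, by omega, ?_⟩
    have hzero : ∀ S ∈ Finset.powersetCard (n - k + 1) (Finset.univ : Finset (Fin n)),
        (∑ F ∈ Finset.powersetCard k ((Finset.univ : Finset (Fin n)) \ S), condTC μ F S)
          / ((n - (n - k + 1)).choose k : ℝ) = 0 := by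
      intro S hS
      rw [Finset.mem_powersetCard] at hS
      have hempty : Finset.powersetCard k ((Finset.univ : Finset (Fin n)) \ S) = ∅ := by
        rw [Finset.powersetCard_eq_empty, Finset.card_sdiff_of_subset hS.1, Finset.card_univ,
          Fintype.card_fin, hS.2]
        omega
      rw [hempty, Finset.sum_empty, zero_div]
    rw [Finset.sum_congr rfl hzero, Finset.sum_const_zero, zero_div]
    exact hRHS

end
end

section
/- Let X_1,…,X_n be the spins of an Ising model with interaction matrix J (a real symmetric matrix with zero diagonal), i.e. X ∈ {±1}^n has law P(x) ∝ exp(Σ_{i<j} J_{ij} x_i x_j). Then for every i ∈ [n], |E[X_i] − tanh(J_i · E[X])| ≤ sqrt(Var(J_i · X)), where J_i is the i-th row of J and J_i · X = Σ_j J_{ij} X_j. -/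
open Finset

noncomputable section
open scoped Classical

/-- The Boltzmann (Gibbs) distribution `P(x) = exp(ham J x)/Z`. -/
def boltz {n : ℕ} (J : Matrix (Fin n) (Fin n) ℝ) (x : Fin n → Bool) : ℝ :=
  Real.exp (ham J x) / partZ J

/-- Expectation of `g` under the Boltzmann distribution. -/
def bExp {n : ℕ} (J : Matrix (Fin n) (Fin n) ℝ) (g : (Fin n → Bool) → ℝ) : ℝ :=
  ∑ x : Fin n → Bool, boltz J x * g x

/-! ### Auxiliary lemmas -/

lemma tanh_hasDerivAt (x : ℝ) : HasDerivAt Real.tanh (1 / Real.cosh x ^ 2) x := by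
  have h := (Real.hasDerivAt_sinh x).div (Real.hasDerivAt_cosh x) (Real.cosh_pos x).ne'
  have heq : (Real.cosh x * Real.cosh x - Real.sinh x * Real.sinh x) / Real.cosh x ^ 2
      = 1 / Real.cosh x ^ 2 := by
    rw [show Real.cosh x * Real.cosh x - Real.sinh x * Real.sinh x
        = Real.cosh x ^ 2 - Real.sinh x ^ 2 by ring, Real.cosh_sq_sub_sinh_sq]
  rw [heq] at h
  have hfun : Real.tanh = fun x => Real.sinh x / Real.cosh x := by
    funext y; exact Real.tanh_eq_sinh_div_cosh y
  rw [hfun]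
  exact h

lemma tanh_lipschitz : LipschitzWith 1 Real.tanh := by
  apply lipschitzWith_of_nnnorm_deriv_le (fun x => (tanh_hasDerivAt x).differentiableAt)
  intro x
  rw [(tanh_hasDerivAt x).deriv]
  have h1 : ‖1 / Real.cosh x ^ 2‖ ≤ 1 := by
    rw [Real.norm_eq_abs, abs_of_nonneg (by positivity), div_le_one (by positivity)]
    have := Real.one_le_cosh x
    nlinarith
  exact_mod_cast h1

lemma tanh_lip (a b : ℝ) : |Real.tanh a - Real.tanh b| ≤ |a - b| := by
  have := tanh_lipschitz.dist_le_mul a b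
  simpa [Real.dist_eq] using this

lemma tanh_cancel (L R : ℝ) :
    (1 - Real.tanh L) * Real.exp (L + R) + (-1 - Real.tanh L) * Real.exp (-L + R) = 0 := by
  rw [Real.tanh_eq_sinh_div_cosh, Real.sinh_eq, Real.cosh_eq, Real.exp_add, Real.exp_add]
  have h : (0:ℝ) < Real.exp L + Real.exp (-L) := by positivity
  field_simp
  ring

/-- The part of the Hamiltonian not involving coordinate `i`. -/
def rest {n : ℕ} (J : Matrix (Fin n) (Fin n) ℝ) (i : Fin n) (x : Fin n → Bool) : ℝ :=
  ∑ a : Fin n, ∑ b : Fin n,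
    if a < b ∧ a ≠ i ∧ b ≠ i then J a b * spin (x a) * spin (x b) else 0

lemma ham_decomp {n : ℕ} (J : Matrix (Fin n) (Fin n) ℝ) (hsym : J.IsSymm)
    (hdiag : ∀ i, J i i = 0) (i : Fin n) (x : Fin n → Bool) :
    ham J x = spin (x i) * (∑ j : Fin n, J i j * spin (x j)) + rest J i x := by
  have split : ∀ a b : Fin n,
      (if a < b then J a b * spin (x a) * spin (x b) else 0)
      = (if a < b ∧ a = i then J a b * spin (x a) * spin (x b) else 0)
        + (if a < b ∧ b = i then J a b * spin (x a) * spin (x b) else 0)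
        + (if a < b ∧ a ≠ i ∧ b ≠ i then J a b * spin (x a) * spin (x b) else 0) := by
    intro a b
    by_cases hab : a < b
    · by_cases ha : a = i
      · have hb : b ≠ i := by rintro rfl; rw [ha] at hab; exact lt_irrefl _ hab
        simp [hab, ha, hb]
      · by_cases hb : b = i <;> simp [hab, ha, hb]
    · simp [hab]
  have h1 : ham J x
      = (∑ a : Fin n, ∑ b : Fin n, if a < b ∧ a = i then J a b * spin (x a) * spin (x b) else 0)
        + (∑ a : Fin n, ∑ b : Fin n, if a < b ∧ b = i then J a b * spin (x a) * spin (x b) else 0)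
        + rest J i x := by
    rw [ham, rest, ← Finset.sum_add_distrib, ← Finset.sum_add_distrib]
    refine Finset.sum_congr rfl fun a _ => ?_
    rw [← Finset.sum_add_distrib, ← Finset.sum_add_distrib]
    exact Finset.sum_congr rfl fun b _ => split a b
  have h2 : (∑ a : Fin n, ∑ b : Fin n,
        if a < b ∧ a = i then J a b * spin (x a) * spin (x b) else 0)
      = ∑ b : Fin n, if i < b then J i b * spin (x i) * spin (x b) else 0 := by
    rw [show (∑ a : Fin n, ∑ b : Fin n,
        if a < b ∧ a = i then J a b * spin (x a) * spin (x b) else 0)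
      = ∑ a : Fin n, if a = i then
          (∑ b : Fin n, if a < b then J a b * spin (x a) * spin (x b) else 0) else 0 from
      Finset.sum_congr rfl fun a _ => by
        by_cases ha : a = i
        · simp only [ha, if_true, and_true]
        · simp [ha]]
    simp
  have h3 : (∑ a : Fin n, ∑ b : Fin n,
        if a < b ∧ b = i then J a b * spin (x a) * spin (x b) else 0)
      = ∑ a : Fin n, if a < i then J a i * spin (x a) * spin (x i) else 0 := by
    refine Finset.sum_congr rfl fun a _ => ?_
    rw [show (∑ b : Fin n, if a < b ∧ b = i then J a b * spin (x a) * spin (x b) else 0)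
      = ∑ b : Fin n, if b = i then (if a < b then J a b * spin (x a) * spin (x b) else 0) else 0
      from Finset.sum_congr rfl fun b _ => by
        by_cases hb : b = i
        · simp only [hb, if_true, and_true]
        · simp [hb]]
    simp
  have h4 : spin (x i) * (∑ j : Fin n, J i j * spin (x j))
      = (∑ b : Fin n, if i < b then J i b * spin (x i) * spin (x b) else 0)
        + (∑ a : Fin n, if a < i then J a i * spin (x a) * spin (x i) else 0) := by
    rw [Finset.mul_sum, ← Finset.sum_add_distrib]
    refine Finset.sum_congr rfl fun j _ => ?_
    rcases lt_trichotomy i j with h | h | h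
    · rw [if_pos h, if_neg (not_lt_of_gt h)]; ring
    · simp [← h, hdiag]
    · rw [if_neg (not_lt_of_gt h), if_pos h, hsym.apply]
      try ring
  rw [h1, h2, h3, ← h4]; try ring

lemma rest_update {n : ℕ} (J : Matrix (Fin n) (Fin n) ℝ) (i : Fin n) (x : Fin n → Bool)
    (b : Bool) : rest J i (Function.update x i b) = rest J i x := by
  refine Finset.sum_congr rfl fun a _ => Finset.sum_congr rfl fun c _ => ?_
  by_cases h : a < c ∧ a ≠ i ∧ c ≠ i
  · rw [if_pos h, if_pos h, Function.update_of_ne h.2.1, Function.update_of_ne h.2.2]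
  · rw [if_neg h, if_neg h]

lemma field_update {n : ℕ} (J : Matrix (Fin n) (Fin n) ℝ) (hdiag : ∀ i, J i i = 0)
    (i : Fin n) (x : Fin n → Bool) (b : Bool) :
    ∑ j : Fin n, J i j * spin (Function.update x i b j) = ∑ j : Fin n, J i j * spin (x j) := by
  refine Finset.sum_congr rfl fun j _ => ?_
  rcases eq_or_ne j i with rfl | hj
  · rw [hdiag]; ring
  · rw [Function.update_of_ne hj]

lemma partZ_pos {n : ℕ} (J : Matrix (Fin n) (Fin n) ℝ) : 0 < partZ J :=
  Finset.sum_pos (fun x _ => Real.exp_pos _) Finset.univ_nonempty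

lemma boltz_nonneg {n : ℕ} (J : Matrix (Fin n) (Fin n) ℝ) (x : Fin n → Bool) :
    0 ≤ boltz J x :=
  div_nonneg (Real.exp_pos _).le (partZ_pos J).le

lemma sum_boltz {n : ℕ} (J : Matrix (Fin n) (Fin n) ℝ) :
    ∑ x : Fin n → Bool, boltz J x = 1 := by
  rw [show (∑ x : Fin n → Bool, boltz J x)
      = (∑ x : Fin n → Bool, Real.exp (ham J x)) / partZ J by
    rw [Finset.sum_div]; rfl]
  rw [← partZ]
  exact div_self (partZ_pos J).ne'

/-- The conditioning identity: `E[X_i] = E[tanh(J_i ⬝ X)]`. -/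
lemma cond_exp {n : ℕ} (J : Matrix (Fin n) (Fin n) ℝ) (hsym : J.IsSymm)
    (hdiag : ∀ i, J i i = 0) (i : Fin n) :
    bExp J (fun x => spin (x i))
      = bExp J (fun x => Real.tanh (∑ j : Fin n, J i j * spin (x j))) := by
  have hsum : ∑ x : Fin n → Bool,
      (spin (x i) - Real.tanh (∑ j : Fin n, J i j * spin (x j))) * Real.exp (ham J x) = 0 := by
    refine Finset.sum_ninvolution (fun x => Function.update x i (!(x i))) ?_ ?_
      (fun x => Finset.mem_univ _) ?_
    · intro x
      set L := ∑ j : Fin n, J i j * spin (x j) with hL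
      set R := rest J i x with hR
      have e1 : ham J x = spin (x i) * L + R := ham_decomp J hsym hdiag i x
      have e2 : ham J (Function.update x i (!(x i))) = spin (!(x i)) * L + R := by
        rw [ham_decomp J hsym hdiag i _, Function.update_self,
          field_update J hdiag i x, rest_update]
      rw [e1, e2]
      beta_reduce
      rw [Function.update_self, field_update J hdiag i x]
      cases hb : x i with
      | true =>
        simp only [hb, Bool.not_true, spin, if_true, Bool.false_eq_true, if_false]
        rw [show (1:ℝ) * L + R = L + R by ring, show (-1:ℝ) * L + R = -L + R by ring]
        exact tanh_cancel L R
      | false =>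
        simp only [hb, Bool.not_false, spin, if_true, Bool.false_eq_true, if_false]
        rw [show (-1:ℝ) * L + R = -L + R by ring, show (1:ℝ) * L + R = L + R by ring,
          add_comm]
        exact tanh_cancel L R
    · intro x _ heq
      have := congrFun heq i
      simp at this
    · intro x
      funext j
      rcases eq_or_ne j i with rfl | hj
      · simp
      · simp [Function.update_of_ne hj]
  have hdiff : bExp J (fun x => spin (x i))
      - bExp J (fun x => Real.tanh (∑ j : Fin n, J i j * spin (x j)))
      = (∑ x : Fin n → Bool,
          (spin (x i) - Real.tanh (∑ j : Fin n, J i j * spin (x j)))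
            * Real.exp (ham J x)) / partZ J := by
    rw [bExp, bExp, ← Finset.sum_sub_distrib, Finset.sum_div]
    refine Finset.sum_congr rfl fun x _ => ?_
    rw [boltz]
    field_simp
  rw [hsum, zero_div] at hdiff
  linarith

/-- The error in the mean-field equation at coordinate `i` is controlled by the standard
deviation of the local field: `|E[X_i] − tanh(J_i · E[X])| ≤ sqrt(Var(J_i · X))`. -/
theorem mean_field_equation_error {n : ℕ} (J : Matrix (Fin n) (Fin n) ℝ)
    (hsym : J.IsSymm) (hdiag : ∀ i, J i i = 0) (i : Fin n) :
    |bExp J (fun x => spin (x i))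
        - Real.tanh (∑ j : Fin n, J i j * bExp J (fun x => spin (x j)))|
      ≤ Real.sqrt (bExp J (fun x => (∑ j : Fin n, J i j * spin (x j)) ^ 2)
          - (bExp J (fun x => ∑ j : Fin n, J i j * spin (x j))) ^ 2) := by
  set L : (Fin n → Bool) → ℝ := fun x => ∑ j : Fin n, J i j * spin (x j) with hLdef
  set μ : ℝ := bExp J L with hμ
  have h0 : ∑ j : Fin n, J i j * bExp J (fun x => spin (x j)) = μ := by
    rw [hμ, bExp]
    calc ∑ j : Fin n, J i j * bExp J (fun x => spin (x j))
        = ∑ j : Fin n, ∑ x : Fin n → Bool, J i j * (boltz J x * spin (x j)) := by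
          refine Finset.sum_congr rfl fun j _ => ?_
          rw [bExp, Finset.mul_sum]
      _ = ∑ x : Fin n → Bool, ∑ j : Fin n, J i j * (boltz J x * spin (x j)) :=
          Finset.sum_comm
      _ = ∑ x : Fin n → Bool, boltz J x * L x := by
          refine Finset.sum_congr rfl fun x _ => ?_
          rw [hLdef, Finset.mul_sum]
          exact Finset.sum_congr rfl fun j _ => by ring
  rw [h0, cond_exp J hsym hdiag i]
  have hw0 : ∀ x : Fin n → Bool, 0 ≤ boltz J x := boltz_nonneg J
  have hw1 : ∑ x : Fin n → Bool, boltz J x = 1 := sum_boltz J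
  set A : ℝ := ∑ x : Fin n → Bool, boltz J x * |L x - μ| with hA
  have hA0 : 0 ≤ A :=
    Finset.sum_nonneg fun x _ => mul_nonneg (hw0 x) (abs_nonneg _)
  have step1 : |bExp J (fun x => Real.tanh (L x)) - Real.tanh μ| ≤ A := by
    have hrw : bExp J (fun x => Real.tanh (L x)) - Real.tanh μ
        = ∑ x : Fin n → Bool, boltz J x * (Real.tanh (L x) - Real.tanh μ) := by
      simp only [mul_sub]
      rw [Finset.sum_sub_distrib, ← Finset.sum_mul, hw1, one_mul, bExp]
    rw [hrw]
    calc |∑ x : Fin n → Bool, boltz J x * (Real.tanh (L x) - Real.tanh μ)|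
        ≤ ∑ x : Fin n → Bool, |boltz J x * (Real.tanh (L x) - Real.tanh μ)| :=
          Finset.abs_sum_le_sum_abs _ _
      _ = ∑ x : Fin n → Bool, boltz J x * |Real.tanh (L x) - Real.tanh μ| := by
          refine Finset.sum_congr rfl fun x _ => ?_
          rw [abs_mul, abs_of_nonneg (hw0 x)]
      _ ≤ A := by
          refine Finset.sum_le_sum fun x _ => ?_
          exact mul_le_mul_of_nonneg_left (tanh_lip (L x) μ) (hw0 x)
  have step2 : A ^ 2 ≤ ∑ x : Fin n → Bool, boltz J x * (L x - μ) ^ 2 := by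
    have hcs := Finset.sum_mul_sq_le_sq_mul_sq Finset.univ
      (fun x : Fin n → Bool => Real.sqrt (boltz J x))
      (fun x : Fin n → Bool => Real.sqrt (boltz J x) * |L x - μ|)
    have e1 : ∑ x : Fin n → Bool,
        Real.sqrt (boltz J x) * (Real.sqrt (boltz J x) * |L x - μ|) = A := by
      refine Finset.sum_congr rfl fun x _ => ?_
      rw [← mul_assoc, Real.mul_self_sqrt (hw0 x)]
    have e2 : ∑ x : Fin n → Bool, Real.sqrt (boltz J x) ^ 2 = 1 := by
      rw [← hw1]
      exact Finset.sum_congr rfl fun x _ => Real.sq_sqrt (hw0 x)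
    have e3 : ∑ x : Fin n → Bool, (Real.sqrt (boltz J x) * |L x - μ|) ^ 2
        = ∑ x : Fin n → Bool, boltz J x * (L x - μ) ^ 2 := by
      refine Finset.sum_congr rfl fun x _ => ?_
      rw [mul_pow, Real.sq_sqrt (hw0 x), sq_abs]
    rw [e1, e2, e3, one_mul] at hcs
    exact hcs
  have step3 : ∑ x : Fin n → Bool, boltz J x * (L x - μ) ^ 2
      = bExp J (fun x => (L x) ^ 2) - μ ^ 2 := by
    have expand : ∑ x : Fin n → Bool, boltz J x * (L x - μ) ^ 2
        = (∑ x : Fin n → Bool, boltz J x * (L x) ^ 2)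
          - 2 * μ * (∑ x : Fin n → Bool, boltz J x * L x)
          + μ ^ 2 * (∑ x : Fin n → Bool, boltz J x) := by
      rw [Finset.mul_sum, Finset.mul_sum, ← Finset.sum_sub_distrib, ← Finset.sum_add_distrib]
      exact Finset.sum_congr rfl fun x _ => by ring
    rw [expand, hw1, show (∑ x : Fin n → Bool, boltz J x * L x) = μ from rfl]
    rw [show bExp J (fun x => (L x) ^ 2) = ∑ x : Fin n → Bool, boltz J x * (L x) ^ 2 from rfl]
    ring
  calc |bExp J (fun x => Real.tanh (L x)) - Real.tanh μ|
      ≤ A := step1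
    _ = Real.sqrt (A ^ 2) := (Real.sqrt_sq hA0).symm
    _ ≤ Real.sqrt (bExp J (fun x => (L x) ^ 2) - μ ^ 2) :=
        Real.sqrt_le_sqrt (step2.trans_eq step3)

end
end

section
/- Let X_1,…,X_n be arbitrary jointly distributed real random variables with finite second moments, and let J be a real symmetric n×n matrix with zero diagonal with rows J_1,…,J_n. Then (1/n) Σ_{i=1}^n Var(J_i · X) ≤ ‖J‖_{s4}² · sqrt(E_{j,k}[Cov(X_j, X_k)²]), where E_{j,k} denotes the average over all n² ordered pairs (j,k) ∈ [n]× [n], and ‖J‖_{s4} = sqrt(‖JᵀJ‖_F) is the Schatten 4-norm. -/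
open Finset MeasureTheory

noncomputable section

/-- Covariance of two real random variables: `Cov(f,g) = E[fg] − E[f]E[g]`. -/
def cov {Ω : Type*} [MeasurableSpace Ω] (μ : Measure Ω) (f g : Ω → ℝ) : ℝ :=
  (∫ ω, f ω * g ω ∂μ) - (∫ ω, f ω ∂μ) * (∫ ω, g ω ∂μ)

/-- The average variance of the local fields `J_i · X` is bounded via the Schatten 4-norm:
`(1/n)∑_i Var(J_i · X) ≤ ‖J‖_{s4}² sqrt(E_{j,k}[Cov(X_j,X_k)²])`,
where `‖J‖_{s4}² = ‖JᵀJ‖_F` and `E_{j,k}` averages over all `n²` ordered pairs. -/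
theorem avg_local_field_variance_bound {n : ℕ} {Ω : Type*} [MeasurableSpace Ω]
    (μ : Measure Ω) [IsProbabilityMeasure μ]
    (X : Fin n → Ω → ℝ) (hX : ∀ i, MemLp (X i) 2 μ)
    (J : Matrix (Fin n) (Fin n) ℝ) (hsym : J.IsSymm) (hdiag : ∀ i, J i i = 0) :
    (1 / n : ℝ) * ∑ i : Fin n,
        cov μ (fun ω => ∑ j : Fin n, J i j * X j ω) (fun ω => ∑ j : Fin n, J i j * X j ω)
      ≤ Real.sqrt (∑ i : Fin n, ∑ j : Fin n, ((J.transpose * J) i j) ^ 2) *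
          Real.sqrt ((∑ j : Fin n, ∑ k : Fin n, (cov μ (X j) (X k)) ^ 2) / (n : ℝ) ^ 2) := by
  rcases Nat.eq_zero_or_pos n with hn | hn
  · subst hn; simp
  have hn' : (0 : ℝ) < n := by exact_mod_cast hn
  have hint : ∀ i, Integrable (X i) μ := fun i => (hX i).integrable one_le_two
  have hmul : ∀ j k, Integrable (fun ω => X j ω * X k ω) μ := by
    intro j k
    have h : MemLp (X j • X k) 1 μ :=
      (hX k).smul (hX j) (hpqr := ⟨by
        simp [ENNReal.inv_two_add_inv_two]⟩)
    exact memLp_one_iff_integrable.mp h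
  set E : Fin n → ℝ := fun j => ∫ ω, X j ω ∂μ with hE
  set P : Fin n → Fin n → ℝ := fun j k => ∫ ω, X j ω * X k ω ∂μ with hP
  -- expand each covariance
  have key : ∀ i, cov μ (fun ω => ∑ j : Fin n, J i j * X j ω)
      (fun ω => ∑ j : Fin n, J i j * X j ω)
      = ∑ j : Fin n, ∑ k : Fin n, J i j * J i k * cov μ (X j) (X k) := by
    intro i
    have h1 : (∫ ω, (∑ j : Fin n, J i j * X j ω) ∂μ) = ∑ j : Fin n, J i j * E j := by
      rw [integral_finset_sum _ (fun j _ => (hint j).const_mul _)]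
      simp [hE, integral_const_mul]
    have h2 : (∫ ω, (∑ j : Fin n, J i j * X j ω) * (∑ k : Fin n, J i k * X k ω) ∂μ)
        = ∑ j : Fin n, ∑ k : Fin n, J i j * J i k * P j k := by
      have : ∀ ω, (∑ j : Fin n, J i j * X j ω) * (∑ k : Fin n, J i k * X k ω)
          = ∑ j : Fin n, ∑ k : Fin n, J i j * J i k * (X j ω * X k ω) := by
        intro ω
        rw [Finset.sum_mul_sum]
        apply Finset.sum_congr rfl; intro j _
        apply Finset.sum_congr rfl; intro k _
        ring
      simp_rw [this]
      rw [integral_finset_sum _ (fun j _ => integrable_finset_sum _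
        (fun k _ => ((hmul j k).const_mul _)))]
      refine Finset.sum_congr rfl fun j _ => ?_
      rw [integral_finset_sum _ (fun k _ => (hmul j k).const_mul _)]
      simp [hP, integral_const_mul]
    simp only [cov]
    rw [h2, h1, Finset.sum_mul_sum, ← Finset.sum_sub_distrib]
    refine Finset.sum_congr rfl fun j _ => ?_
    rw [← Finset.sum_sub_distrib]
    refine Finset.sum_congr rfl fun k _ => ?_
    ring
  have hsum : ∑ i : Fin n, cov μ (fun ω => ∑ j : Fin n, J i j * X j ω)
      (fun ω => ∑ j : Fin n, J i j * X j ω)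
      = ∑ j : Fin n, ∑ k : Fin n, (J.transpose * J) j k * cov μ (X j) (X k) := by
    simp_rw [key, Matrix.mul_apply, Matrix.transpose_apply, Finset.sum_mul]
    rw [Finset.sum_comm]
    refine Finset.sum_congr rfl fun j _ => ?_
    rw [Finset.sum_comm]
  -- Cauchy–Schwarz
  have hCS : ∑ j : Fin n, ∑ k : Fin n, (J.transpose * J) j k * cov μ (X j) (X k)
      ≤ Real.sqrt (∑ i : Fin n, ∑ j : Fin n, ((J.transpose * J) i j) ^ 2) *
        Real.sqrt (∑ j : Fin n, ∑ k : Fin n, (cov μ (X j) (X k)) ^ 2) := by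
    have h := Finset.sum_mul_sq_le_sq_mul_sq Finset.univ
      (fun p : Fin n × Fin n => (J.transpose * J) p.1 p.2)
      (fun p : Fin n × Fin n => cov μ (X p.1) (X p.2))
    have e1 : ∑ p : Fin n × Fin n, (J.transpose * J) p.1 p.2 * cov μ (X p.1) (X p.2)
        = ∑ j : Fin n, ∑ k : Fin n, (J.transpose * J) j k * cov μ (X j) (X k) := by
      rw [← Finset.univ_product_univ, Finset.sum_product]
    have e2 : ∑ p : Fin n × Fin n, ((J.transpose * J) p.1 p.2) ^ 2
        = ∑ i : Fin n, ∑ j : Fin n, ((J.transpose * J) i j) ^ 2 := by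
      rw [← Finset.univ_product_univ, Finset.sum_product]
    have e3 : ∑ p : Fin n × Fin n, (cov μ (X p.1) (X p.2)) ^ 2
        = ∑ j : Fin n, ∑ k : Fin n, (cov μ (X j) (X k)) ^ 2 := by
      rw [← Finset.univ_product_univ, Finset.sum_product]
    rw [e1, e2, e3] at h
    calc ∑ j : Fin n, ∑ k : Fin n, (J.transpose * J) j k * cov μ (X j) (X k)
        ≤ |∑ j : Fin n, ∑ k : Fin n, (J.transpose * J) j k * cov μ (X j) (X k)| :=
          le_abs_self _
      _ = Real.sqrt ((∑ j : Fin n, ∑ k : Fin n,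
            (J.transpose * J) j k * cov μ (X j) (X k)) ^ 2) := (Real.sqrt_sq_eq_abs _).symm
      _ ≤ Real.sqrt ((∑ i : Fin n, ∑ j : Fin n, ((J.transpose * J) i j) ^ 2) *
            (∑ j : Fin n, ∑ k : Fin n, (cov μ (X j) (X k)) ^ 2)) := Real.sqrt_le_sqrt h
      _ = _ := Real.sqrt_mul (by positivity) _
  have hdiv : Real.sqrt ((∑ j : Fin n, ∑ k : Fin n, (cov μ (X j) (X k)) ^ 2) / (n : ℝ) ^ 2)
      = Real.sqrt (∑ j : Fin n, ∑ k : Fin n, (cov μ (X j) (X k)) ^ 2) / n := by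
    rw [Real.sqrt_div' , Real.sqrt_sq hn'.le] 
    positivity
  rw [hsum]
  calc (1 / n : ℝ) * ∑ j : Fin n, ∑ k : Fin n, (J.transpose * J) j k * cov μ (X j) (X k)
      ≤ (1 / n : ℝ) * (Real.sqrt (∑ i : Fin n, ∑ j : Fin n, ((J.transpose * J) i j) ^ 2) *
          Real.sqrt (∑ j : Fin n, ∑ k : Fin n, (cov μ (X j) (X k)) ^ 2)) := by
        apply mul_le_mul_of_nonneg_left hCS (by positivity)
    _ = Real.sqrt (∑ i : Fin n, ∑ j : Fin n, ((J.transpose * J) i j) ^ 2) *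
          Real.sqrt ((∑ j : Fin n, ∑ k : Fin n, (cov μ (X j) (X k)) ^ 2) / (n : ℝ) ^ 2) := by
        rw [hdiv]; ring

end
end
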